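/- arXiv:2501.03858 — 7 statements merged into one kernel-verified Lean document; each statement's English description precedes it below -/
import Mathlib

section
/- Let U be any linear subspace of L2(X,Y,μ) that is closed under the averaging operator Q (i.e. QU ⊆ U). Define S = {f ∈ U : f is G-equivariant} and A = {f ∈ U : Qf = 0}. Then U admits the orthogonal direct-sum decomposition U = S ⊕ A: every u ∈ U can be written uniquely as u = s + a with s ∈ S, a ∈ A, and ⟨s, a⟩_μ = 0. -/
open MeasureTheory
open scoped ENNReal InnerProductSpace

/-- The equivariant averaging operator `Q f (x) = ∫_G ψ(g)⁻¹ f (φ(g) x) dλ(g)`. -/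
noncomputable def avgQ {G X : Type*} [MeasurableSpace G] {k : ℕ}
    (lam : Measure G) (φ : G → X → X)
    (ψ : G → (EuclideanSpace ℝ (Fin k) ≃ₗᵢ[ℝ] EuclideanSpace ℝ (Fin k)))
    (f : X → EuclideanSpace ℝ (Fin k)) : X → EuclideanSpace ℝ (Fin k) :=
  fun x => ∫ g, (ψ g).symm (f (φ g x)) ∂lam

/-- `f` is `G`-equivariant: `f (φ g x) = ψ g (f x)` for all `g, x`. -/
def IsEquivariant {G X : Type*} {k : ℕ} (φ : G → X → X)
    (ψ : G → (EuclideanSpace ℝ (Fin k) ≃ₗᵢ[ℝ] EuclideanSpace ℝ (Fin k)))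
    (f : X → EuclideanSpace ℝ (Fin k)) : Prop :=
  ∀ g x, f (φ g x) = ψ g (f x)

set_option linter.unusedSectionVars false

section Helpers

variable {G X : Type*} [Group G] [TopologicalSpace G] [IsTopologicalGroup G]
    [CompactSpace G] [SecondCountableTopology G] [T2Space G]
    [MeasurableSpace G] [BorelSpace G]
    [TopologicalSpace X] [PolishSpace X] [MeasurableSpace X] [BorelSpace X]
    {k : ℕ}

lemma psi_symm_eq
    (ψ : G → (EuclideanSpace ℝ (Fin k) ≃ₗᵢ[ℝ] EuclideanSpace ℝ (Fin k)))
    (hψ_one : ∀ v, ψ 1 v = v)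
    (hψ_mul : ∀ g h v, ψ (g * h) v = ψ g (ψ h v))
    (g : G) (v : EuclideanSpace ℝ (Fin k)) : (ψ g).symm v = ψ g⁻¹ v := by
  apply (ψ g).injective
  rw [LinearIsometryEquiv.apply_symm_apply, ← hψ_mul]
  simp [hψ_one]

lemma sq_int {f : X → EuclideanSpace ℝ (Fin k)} {μ : Measure X}
    (hf : MemLp f 2 μ) : Integrable (fun x => ‖f x‖ ^ 2) μ := by
  have := hf.integrable_norm_rpow two_ne_zero ENNReal.ofNat_ne_top
  refine this.congr (Filter.Eventually.of_forall fun x => ?_)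
  have h2 : ((2 : ℝ≥0∞)).toReal = ((2:ℕ):ℝ) := by norm_num
  simp only [h2, Real.rpow_natCast]

lemma ortho_key
    (lam : Measure G) [IsProbabilityMeasure lam]
    (φ : G → X → X) (hφ_meas : Measurable fun p : G × X => φ p.1 p.2)
    (ψ : G → (EuclideanSpace ℝ (Fin k) ≃ₗᵢ[ℝ] EuclideanSpace ℝ (Fin k)))
    (hψ_meas : Measurable fun p : G × EuclideanSpace ℝ (Fin k) => ψ p.1 p.2)
    (hψ_one : ∀ v, ψ 1 v = v) (hψ_mul : ∀ g h v, ψ (g * h) v = ψ g (ψ h v))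
    (μ : Measure X) [IsProbabilityMeasure μ]
    (hμ_inv : ∀ g : G, Measure.map (φ g) μ = μ)
    (f h : X → EuclideanSpace ℝ (Fin k))
    (hf2 : MemLp f 2 μ) (hh2 : MemLp h 2 μ)
    (hfe : IsEquivariant φ ψ f)
    (hh0 : ∀ x, avgQ lam φ ψ h x = 0) :
    ∫ x, (inner ℝ (f x) (h x) : ℝ) ∂μ = 0 := by
  have hφg : ∀ g : G, Measurable (φ g) := fun g => hφ_meas.comp measurable_prodMk_left
  -- the product measure and the measure preserving action map
  have hΦmp : MeasurePreserving (fun p : G × X => φ p.1 p.2) (lam.prod μ) μ := by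
    refine ⟨hφ_meas, ?_⟩
    ext A hA
    rw [Measure.map_apply hφ_meas hA, Measure.prod_apply (hφ_meas hA)]
    have hfib : ∀ g : G, μ (Prod.mk g ⁻¹' ((fun p : G × X => φ p.1 p.2) ⁻¹' A)) = μ A := by
      intro g
      have h1 : Prod.mk g ⁻¹' ((fun p : G × X => φ p.1 p.2) ⁻¹' A) = (φ g) ⁻¹' A := rfl
      rw [h1, ← Measure.map_apply (hφg g) hA, hμ_inv g]
    simp_rw [hfib]
    simp
  have hsnd : MeasurePreserving (Prod.snd : G × X → X) (lam.prod μ) μ :=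
    ⟨measurable_snd, Measure.snd_prod⟩
  -- measurability of the kernel
  have hhm : AEMeasurable h μ := hh2.aestronglyMeasurable.aemeasurable
  have hfm : AEMeasurable f μ := hf2.aestronglyMeasurable.aemeasurable
  have hcomp : AEMeasurable (fun p : G × X => h (φ p.1 p.2)) (lam.prod μ) :=
    hhm.comp_quasiMeasurePreserving hΦmp.quasiMeasurePreserving
  have houter : Measurable (fun q : G × EuclideanSpace ℝ (Fin k) => ψ q.1⁻¹ q.2) :=
    hψ_meas.comp ((measurable_fst.inv).prodMk measurable_snd)
  have hH : AEMeasurable (fun p : G × X => ψ p.1⁻¹ (h (φ p.1 p.2))) (lam.prod μ) :=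
    houter.comp_aemeasurable (measurable_fst.aemeasurable.prodMk hcomp)
  have hfπ : AEMeasurable (fun p : G × X => f p.2) (lam.prod μ) :=
    hfm.comp_quasiMeasurePreserving hsnd.quasiMeasurePreserving
  have hF_aesm : AEStronglyMeasurable
      (fun p : G × X => (inner ℝ (f p.2) (ψ p.1⁻¹ (h (φ p.1 p.2))) : ℝ)) (lam.prod μ) :=
    hfπ.aestronglyMeasurable.inner hH.aestronglyMeasurable
  -- integrability of the kernel
  have hD1 : Integrable (fun p : G × X => ‖f p.2‖ ^ 2) (lam.prod μ) :=
    ((hsnd.integrable_comp (sq_int hf2).aestronglyMeasurable).mpr (sq_int hf2))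
  have hD2 : Integrable (fun p : G × X => ‖h (φ p.1 p.2)‖ ^ 2) (lam.prod μ) :=
    ((hΦmp.integrable_comp (sq_int hh2).aestronglyMeasurable).mpr (sq_int hh2))
  have hFint : Integrable
      (fun p : G × X => (inner ℝ (f p.2) (ψ p.1⁻¹ (h (φ p.1 p.2))) : ℝ)) (lam.prod μ) := by
    refine ((hD1.add hD2).const_mul (1/2 : ℝ)).mono' hF_aesm
      (Filter.Eventually.of_forall fun p => ?_)
    have h1 : |(inner ℝ (f p.2) (ψ p.1⁻¹ (h (φ p.1 p.2))) : ℝ)|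
        ≤ ‖f p.2‖ * ‖ψ p.1⁻¹ (h (φ p.1 p.2))‖ := abs_real_inner_le_norm _ _
    have h2 : ‖ψ p.1⁻¹ (h (φ p.1 p.2))‖ = ‖h (φ p.1 p.2)‖ :=
      (ψ p.1⁻¹).norm_map _
    rw [Real.norm_eq_abs]
    rw [h2] at h1
    refine h1.trans ?_
    rw [Pi.add_apply]
    nlinarith [sq_nonneg (‖f p.2‖ - ‖h (φ p.1 p.2)‖), sq_nonneg (‖f p.2‖), sq_nonneg (‖h (φ p.1 p.2)‖)]
  -- step 1 : the integral is invariant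
  have hk_aesm : AEStronglyMeasurable (fun x => (inner ℝ (f x) (h x) : ℝ)) μ :=
    hf2.aestronglyMeasurable.inner hh2.aestronglyMeasurable
  have step1 : ∀ g : G, ∫ x, (inner ℝ (f x) (h x) : ℝ) ∂μ
      = ∫ x, (inner ℝ (f x) (ψ g⁻¹ (h (φ g x))) : ℝ) ∂μ := by
    intro g
    have e1 : ∫ x, (inner ℝ (f x) (h x) : ℝ) ∂μ
        = ∫ x, (inner ℝ (f (φ g x)) (h (φ g x)) : ℝ) ∂μ := by
      conv_lhs => rw [← hμ_inv g]
      rw [integral_map (hφg g).aemeasurable]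
      rw [hμ_inv g]; exact hk_aesm
    rw [e1]
    refine integral_congr_ae (Filter.Eventually.of_forall fun x => ?_)
    show (inner ℝ (f (φ g x)) (h (φ g x)) : ℝ) = inner ℝ (f x) (ψ g⁻¹ (h (φ g x)))
    rw [hfe g x, LinearIsometryEquiv.inner_map_eq_flip,
      psi_symm_eq ψ hψ_one hψ_mul]
  -- average over the group and use Fubini
  have main : ∫ x, (inner ℝ (f x) (h x) : ℝ) ∂μ
      = ∫ g, ∫ x, (inner ℝ (f x) (ψ g⁻¹ (h (φ g x))) : ℝ) ∂μ ∂lam := by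
    rw [← integral_congr_ae (Filter.Eventually.of_forall step1)]
    simp
  rw [MeasureTheory.integral_integral_swap hFint] at main
  -- the inner integral vanishes a.e.
  have hHint : Integrable (fun p : G × X => ψ p.1⁻¹ (h (φ p.1 p.2))) (lam.prod μ) := by
    have hbase : Integrable (fun p : G × X => h (φ p.1 p.2)) (lam.prod μ) :=
      (hΦmp.integrable_comp (hh2.integrable one_le_two).aestronglyMeasurable).mpr
        (hh2.integrable one_le_two)
    refine hbase.norm.mono' hH.aestronglyMeasurable
      (Filter.Eventually.of_forall fun p => ?_)
    simp [(ψ p.1⁻¹).norm_map]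
  have hae : ∀ᵐ x ∂μ, Integrable (fun g => ψ g⁻¹ (h (φ g x))) lam :=
    hHint.prod_left_ae
  have hzero : ∀ᵐ x ∂μ, (∫ g, (inner ℝ (f x) (ψ g⁻¹ (h (φ g x))) : ℝ) ∂lam) = 0 := by
    filter_upwards [hae] with x hx
    rw [integral_inner hx]
    have hq : (∫ g, ψ g⁻¹ (h (φ g x)) ∂lam) = 0 := by
      have := hh0 x
      unfold avgQ at this
      rw [← this]
      refine integral_congr_ae (Filter.Eventually.of_forall fun g => ?_)
      show ψ g⁻¹ (h (φ g x)) = (ψ g).symm (h (φ g x))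
      exact (psi_symm_eq ψ hψ_one hψ_mul g _).symm
    rw [hq, inner_zero_right]
  rw [integral_congr_ae hzero, integral_zero] at main
  exact main

lemma avgQ_equivariant
    (lam : Measure G) [IsProbabilityMeasure lam]
    (hlam_right : ∀ g : G, Measure.map (fun h => h * g) lam = lam)
    (φ : G → X → X) (hφ_mul : ∀ g h x, φ (g * h) x = φ g (φ h x))
    (ψ : G → (EuclideanSpace ℝ (Fin k) ≃ₗᵢ[ℝ] EuclideanSpace ℝ (Fin k)))
    (hψ_mul : ∀ g h v, ψ (g * h) v = ψ g (ψ h v))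
    (u : X → EuclideanSpace ℝ (Fin k)) :
    IsEquivariant φ ψ (avgQ lam φ ψ u) := by
  intro h x
  have key : ∀ g : G, (ψ g).symm (u (φ g (φ h x)))
      = ψ h ((ψ (g * h)).symm (u (φ (g * h) x))) := by
    intro g
    rw [← hφ_mul]
    apply (ψ g).injective
    rw [LinearIsometryEquiv.apply_symm_apply, ← hψ_mul,
      LinearIsometryEquiv.apply_symm_apply]
  show (∫ g, (ψ g).symm (u (φ g (φ h x))) ∂lam)
      = ψ h (∫ g, (ψ g).symm (u (φ g x)) ∂lam)
  calc (∫ g, (ψ g).symm (u (φ g (φ h x))) ∂lam)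
      = ∫ g, ψ h ((ψ (g * h)).symm (u (φ (g * h) x))) ∂lam := by
        exact integral_congr_ae (Filter.Eventually.of_forall key)
    _ = ψ h (∫ g, (ψ (g * h)).symm (u (φ (g * h) x)) ∂lam) :=
        (ψ h).toLinearIsometry.integral_comp_comm _
    _ = ψ h (∫ g, (ψ g).symm (u (φ g x)) ∂lam) := by
        congr 1
        have hmap : Measure.map (MeasurableEquiv.mulRight h) lam = lam := by
          simpa using hlam_right h
        have := MeasureTheory.integral_map_equiv (μ := lam)
          (MeasurableEquiv.mulRight h) (fun g => (ψ g).symm (u (φ g x)))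
        rw [hmap] at this
        simpa using this.symm


lemma avgQ_of_equivariant
    (lam : Measure G) [IsProbabilityMeasure lam]
    (φ : G → X → X)
    (ψ : G → (EuclideanSpace ℝ (Fin k) ≃ₗᵢ[ℝ] EuclideanSpace ℝ (Fin k)))
    (s : X → EuclideanSpace ℝ (Fin k)) (hs : IsEquivariant φ ψ s) (x : X) :
    avgQ lam φ ψ s x = s x := by
  show (∫ g, (ψ g).symm (s (φ g x)) ∂lam) = s x
  have : ∀ g : G, (ψ g).symm (s (φ g x)) = s x := by
    intro g; rw [hs g x, LinearIsometryEquiv.symm_apply_apply]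
  rw [integral_congr_ae (Filter.Eventually.of_forall this)]
  simp


lemma avgQ_sub_avgQ
    (lam : Measure G) [IsProbabilityMeasure lam]
    (hlam_right : ∀ g : G, Measure.map (fun h => h * g) lam = lam)
    (φ : G → X → X) (hφ_mul : ∀ g h x, φ (g * h) x = φ g (φ h x))
    (ψ : G → (EuclideanSpace ℝ (Fin k) ≃ₗᵢ[ℝ] EuclideanSpace ℝ (Fin k)))
    (hψ_mul : ∀ g h v, ψ (g * h) v = ψ g (ψ h v))
    (u : X → EuclideanSpace ℝ (Fin k)) (x : X) :
    avgQ lam φ ψ (u - avgQ lam φ ψ u) x = 0 := by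
  set s := avgQ lam φ ψ u with hs
  have hse : IsEquivariant φ ψ s := avgQ_equivariant lam hlam_right φ hφ_mul ψ hψ_mul u
  show (∫ g, (ψ g).symm ((u - s) (φ g x)) ∂lam) = 0
  have hpt : ∀ g : G, (ψ g).symm ((u - s) (φ g x))
      = (ψ g).symm (u (φ g x)) - s x := by
    intro g
    rw [Pi.sub_apply, map_sub, hse g x, LinearIsometryEquiv.symm_apply_apply]
  rw [integral_congr_ae (Filter.Eventually.of_forall hpt)]
  by_cases hint : Integrable (fun g => (ψ g).symm (u (φ g x))) lam
  · rw [integral_sub hint (integrable_const _)]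
    simp only [integral_const, measure_univ, ENNReal.toReal_one, probReal_univ, one_smul]
    rw [sub_eq_zero]
    rfl
  · rw [integral_undef]
    intro hI
    refine hint ((hI.add (integrable_const (s x))).congr
      (Filter.Eventually.of_forall fun g => ?_))
    simp


lemma inner_int {μ : Measure X} {f h : X → EuclideanSpace ℝ (Fin k)}
    (hf : MemLp f 2 μ) (hh : MemLp h 2 μ) :
    Integrable (fun x => (inner ℝ (f x) (h x) : ℝ)) μ := by
  refine (((sq_int hf).add (sq_int hh)).const_mul (1/2 : ℝ)).mono'
    (hf.aestronglyMeasurable.inner hh.aestronglyMeasurable)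
    (Filter.Eventually.of_forall fun x => ?_)
  rw [Real.norm_eq_abs, Pi.add_apply]
  have h1 := abs_real_inner_le_norm (f x) (h x)
  nlinarith [sq_nonneg (‖f x‖ - ‖h x‖)]

end Helpers

/-- Any subspace `U` of `L2(X, Y, μ)` closed under `Q` decomposes orthogonally as
`U = S ⊕ A`, where `S` is the set of equivariant members and `A = {f : Q f = 0}`. -/
theorem stmt_0 {G X : Type*} [Group G] [TopologicalSpace G] [IsTopologicalGroup G]
    [CompactSpace G] [SecondCountableTopology G] [T2Space G]
    [MeasurableSpace G] [BorelSpace G]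
    [TopologicalSpace X] [PolishSpace X] [MeasurableSpace X] [BorelSpace X]
    {k : ℕ}
    (lam : Measure G) [IsProbabilityMeasure lam]
    (hlam_left : ∀ g : G, Measure.map (fun h => g * h) lam = lam)
    (hlam_right : ∀ g : G, Measure.map (fun h => h * g) lam = lam)
    (hlam_inv : Measure.map (fun g : G => g⁻¹) lam = lam)
    (φ : G → X → X)
    (hφ_meas : Measurable fun p : G × X => φ p.1 p.2)
    (hφ_one : ∀ x, φ 1 x = x)
    (hφ_mul : ∀ g h x, φ (g * h) x = φ g (φ h x))
    (ψ : G → (EuclideanSpace ℝ (Fin k) ≃ₗᵢ[ℝ] EuclideanSpace ℝ (Fin k)))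
    (hψ_meas : Measurable fun p : G × EuclideanSpace ℝ (Fin k) => ψ p.1 p.2)
    (hψ_one : ∀ v, ψ 1 v = v)
    (hψ_mul : ∀ g h v, ψ (g * h) v = ψ g (ψ h v))
    (μ : Measure X) [IsProbabilityMeasure μ]
    (hμ_inv : ∀ g : G, Measure.map (φ g) μ = μ)
    (U : Set (X → EuclideanSpace ℝ (Fin k)))
    (hU_L2 : ∀ f ∈ U, MemLp f 2 μ)
    (hU_zero : ((fun _ => 0) : X → EuclideanSpace ℝ (Fin k)) ∈ U)
    (hU_add : ∀ f ∈ U, ∀ h ∈ U, f + h ∈ U)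
    (hU_smul : ∀ (c : ℝ), ∀ f ∈ U, c • f ∈ U)
    (hU_Q : ∀ f ∈ U, avgQ lam φ ψ f ∈ U) :
    ∀ u ∈ U,
      (∃ s ∈ U, ∃ a ∈ U,
        IsEquivariant φ ψ s ∧ (∀ x, avgQ lam φ ψ a x = 0) ∧
        u =ᵐ[μ] s + a ∧ ∫ x, (inner ℝ (s x) (a x) : ℝ) ∂μ = 0) ∧
      (∀ s ∈ U, ∀ a ∈ U, ∀ s' ∈ U, ∀ a' ∈ U,
        IsEquivariant φ ψ s → (∀ x, avgQ lam φ ψ a x = 0) →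
        IsEquivariant φ ψ s' → (∀ x, avgQ lam φ ψ a' x = 0) →
        u =ᵐ[μ] s + a → u =ᵐ[μ] s' + a' →
        s =ᵐ[μ] s' ∧ a =ᵐ[μ] a') := by
  intro u hu
  constructor
  · -- existence
    set s := avgQ lam φ ψ u with hsdef
    have hsU : s ∈ U := hU_Q u hu
    have hse : IsEquivariant φ ψ s := avgQ_equivariant lam hlam_right φ hφ_mul ψ hψ_mul u
    set a := u + (-1 : ℝ) • s with hadef
    have haU : a ∈ U := hU_add u hu _ (hU_smul (-1) s hsU)
    have ha_eq : a = u - s := by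
      funext x
      show u x + (-1 : ℝ) • s x = u x - s x
      rw [neg_one_smul, ← sub_eq_add_neg]
    have ha0 : ∀ x, avgQ lam φ ψ a x = 0 := by
      rw [ha_eq, hsdef]
      exact avgQ_sub_avgQ lam hlam_right φ hφ_mul ψ hψ_mul u
    have husa : u = s + a := by
      funext x
      show u x = s x + (u x + (-1 : ℝ) • s x)
      rw [neg_one_smul]
      abel
    refine ⟨s, hsU, a, haU, hse, ha0, ?_, ?_⟩
    · rw [← husa]
    · exact ortho_key lam φ hφ_meas ψ hψ_meas hψ_one hψ_mul μ hμ_inv s a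
        (hU_L2 s hsU) (hU_L2 a haU) hse ha0
  · -- uniqueness
    intro s hsU a haU s' hs'U a' ha'U hse h_a0 hs'e h_a'0 h1 h2
    have hs2 : MemLp s 2 μ := hU_L2 s hsU
    have hs'2 : MemLp s' 2 μ := hU_L2 s' hs'U
    have ha2 : MemLp a 2 μ := hU_L2 a haU
    have ha'2 : MemLp a' 2 μ := hU_L2 a' ha'U
    set d := s - s' with hd
    have hd2 : MemLp d 2 μ := hs2.sub hs'2
    have hde : IsEquivariant φ ψ d := by
      intro g x
      show s (φ g x) - s' (φ g x) = ψ g (s x - s' x)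
      rw [hse g x, hs'e g x, map_sub]
    have ho1 : ∫ x, (inner ℝ (d x) (a x) : ℝ) ∂μ = 0 :=
      ortho_key lam φ hφ_meas ψ hψ_meas hψ_one hψ_mul μ hμ_inv d a hd2 ha2 hde h_a0
    have ho2 : ∫ x, (inner ℝ (d x) (a' x) : ℝ) ∂μ = 0 :=
      ortho_key lam φ hφ_meas ψ hψ_meas hψ_one hψ_mul μ hμ_inv d a' hd2 ha'2 hde h_a'0
    have h3 : s + a =ᵐ[μ] s' + a' := h1.symm.trans h2
    have hdd : d =ᵐ[μ] a' - a := by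
      filter_upwards [h3] with x hx
      have hx' : s x + a x = s' x + a' x := hx
      show s x - s' x = a' x - a x
      rw [sub_eq_sub_iff_add_eq_add, hx']
      exact add_comm _ _
    have hnorm : ∫ x, ‖d x‖ ^ 2 ∂μ = 0 := by
      have e1 : ∫ x, ‖d x‖ ^ 2 ∂μ = ∫ x, (inner ℝ (d x) (a' x - a x) : ℝ) ∂μ := by
        refine integral_congr_ae ?_
        filter_upwards [hdd] with x hx
        rw [← real_inner_self_eq_norm_sq]
        show (inner ℝ (d x) (d x) : ℝ) = inner ℝ (d x) (a' x - a x)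
        rw [hx]
        rfl
      have e2 : ∫ x, (inner ℝ (d x) (a' x - a x) : ℝ) ∂μ = 0 := by
        have hsplit : ∀ x, (inner ℝ (d x) (a' x - a x) : ℝ)
            = inner ℝ (d x) (a' x) - inner ℝ (d x) (a x) :=
          fun x => inner_sub_right _ _ _
        rw [integral_congr_ae (Filter.Eventually.of_forall hsplit),
          integral_sub (inner_int hd2 ha'2) (inner_int hd2 ha2), ho2, ho1, sub_zero]
      rw [e1, e2]
    have hd0 : d =ᵐ[μ] 0 := by
      have hint : Integrable (fun x => ‖d x‖ ^ 2) μ := sq_int hd2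
      have hnn : (0 : X → ℝ) ≤ fun x => ‖d x‖ ^ 2 := fun x => sq_nonneg _
      have hz := (integral_eq_zero_iff_of_nonneg hnn hint).mp hnorm
      filter_upwards [hz] with x hx
      have hx2 : ‖d x‖ ^ 2 = 0 := hx
      have hx3 : ‖d x‖ = 0 := by nlinarith [norm_nonneg (d x)]
      simpa using hx3
    have hss' : s =ᵐ[μ] s' := by
      filter_upwards [hd0] with x hx
      have : s x - s' x = 0 := hx
      exact sub_eq_zero.mp this
    refine ⟨hss', ?_⟩
    filter_upwards [h3, hss'] with x hx hsx
    have hx' : s x + a x = s' x + a' x := hx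
    rw [hsx] at hx'
    exact add_left_cancel hx'
end

section
/- For every f ∈ L2(X,Y,μ): (1) the function Qf, with values Qf(x) = ∫_G ψ(g)⁻¹ f(φ(g)x) dλ(g), is μ-measurable, and (2) Qf ∈ L2(X,Y,μ) with ‖Qf‖_μ ≤ ‖f‖_μ. -/
open MeasureTheory
open scoped ENNReal

/-- For every `f ∈ L2(X,Y,μ)`, the averaged function `Q f` is `μ`-measurable and
belongs to `L2(X,Y,μ)` with `‖Q f‖_μ ≤ ‖f‖_μ`. -/
theorem stmt_1 {G X : Type*} [Group G] [TopologicalSpace G] [IsTopologicalGroup G]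
    [CompactSpace G] [SecondCountableTopology G] [T2Space G]
    [MeasurableSpace G] [BorelSpace G]
    [TopologicalSpace X] [PolishSpace X] [MeasurableSpace X] [BorelSpace X]
    {k : ℕ}
    (lam : Measure G) [IsProbabilityMeasure lam]
    (hlam_left : ∀ g : G, Measure.map (fun h => g * h) lam = lam)
    (hlam_right : ∀ g : G, Measure.map (fun h => h * g) lam = lam)
    (hlam_inv : Measure.map (fun g : G => g⁻¹) lam = lam)
    (φ : G → X → X)
    (hφ_meas : Measurable fun p : G × X => φ p.1 p.2)
    (hφ_one : ∀ x, φ 1 x = x)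
    (hφ_mul : ∀ g h x, φ (g * h) x = φ g (φ h x))
    (ψ : G → (EuclideanSpace ℝ (Fin k) ≃ₗᵢ[ℝ] EuclideanSpace ℝ (Fin k)))
    (hψ_meas : Measurable fun p : G × EuclideanSpace ℝ (Fin k) => ψ p.1 p.2)
    (hψ_one : ∀ v, ψ 1 v = v)
    (hψ_mul : ∀ g h v, ψ (g * h) v = ψ g (ψ h v))
    (μ : Measure X) [IsProbabilityMeasure μ]
    (hμ_inv : ∀ g : G, Measure.map (φ g) μ = μ)
    (f : X → EuclideanSpace ℝ (Fin k))
    (hf : MemLp f 2 μ) :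
    AEStronglyMeasurable (avgQ lam φ ψ f) μ ∧
    MemLp (avgQ lam φ ψ f) 2 μ ∧
    eLpNorm (avgQ lam φ ψ f) 2 μ ≤ eLpNorm f 2 μ := by
  obtain ⟨f', hf'sm, hff'⟩ := hf.1
  have hf'm : Measurable f' := hf'sm.measurable
  have hφg : ∀ g : G, Measurable (φ g) := fun g =>
    hφ_meas.comp (measurable_const.prodMk measurable_id)
  have hsymm : ∀ g v, (ψ g).symm v = ψ g⁻¹ v := by
    intro g v
    have hv : ψ g (ψ g⁻¹ v) = v := by rw [← hψ_mul, mul_inv_cancel, hψ_one]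
    exact (ψ g).symm_apply_eq.mpr hv.symm
  -- measurable representative of the integrand
  set Φ' : G × X → EuclideanSpace ℝ (Fin k) := fun p => ψ p.1⁻¹ (f' (φ p.1 p.2)) with hΦ'def
  have hΦ'm : Measurable Φ' :=
    hψ_meas.comp ((measurable_fst.inv).prodMk (hf'm.comp hφ_meas))
  -- the skew product map is measure preserving
  have hT : MeasurePreserving (fun p : G × X => (p.1, φ p.1 p.2)) (lam.prod μ) (lam.prod μ) :=
    (MeasurePreserving.id lam).skew_product hφ_meas (Filter.Eventually.of_forall hμ_inv)
  have hsnd : MeasurePreserving (Prod.snd : G × X → X) (lam.prod μ) μ := by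
    refine ⟨measurable_snd, ?_⟩
    rw [Measure.map_snd_prod]
    simp
  have h1 : (f ∘ Prod.snd : G × X → _) =ᵐ[lam.prod μ] (f' ∘ Prod.snd) :=
    hsnd.quasiMeasurePreserving.ae_eq_comp hff'
  have hae : ((f ∘ Prod.snd) ∘ fun p : G × X => (p.1, φ p.1 p.2)) =ᵐ[lam.prod μ]
      ((f' ∘ Prod.snd) ∘ fun p : G × X => (p.1, φ p.1 p.2)) :=
    hT.quasiMeasurePreserving.ae_eq_comp h1
  have hΦae : (fun p : G × X => (ψ p.1).symm (f (φ p.1 p.2))) =ᵐ[lam.prod μ] Φ' := by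
    filter_upwards [hae] with p hp
    have hp' : f (φ p.1 p.2) = f' (φ p.1 p.2) := hp
    rw [hsymm, hp']
  -- sections
  have hswap : ((fun p : G × X => (ψ p.1).symm (f (φ p.1 p.2))) ∘ Prod.swap)
      =ᵐ[μ.prod lam] (Φ' ∘ Prod.swap) :=
    (Measure.measurePreserving_swap).quasiMeasurePreserving.ae_eq_comp hΦae
  have hsec : ∀ᵐ x ∂μ, ∀ᵐ g ∂lam, (ψ g).symm (f (φ g x)) = Φ' (g, x) :=
    Measure.ae_ae_of_ae_prod hswap
  set Q' : X → EuclideanSpace ℝ (Fin k) := fun x => ∫ g, Φ' (g, x) ∂lam with hQ'def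
  have hQ'sm : StronglyMeasurable Q' := hΦ'm.stronglyMeasurable.integral_prod_left'
  have haeQ : avgQ lam φ ψ f =ᵐ[μ] Q' := by
    filter_upwards [hsec] with x hx
    exact integral_congr_ae hx
  have haesm : AEStronglyMeasurable (avgQ lam φ ψ f) μ := ⟨Q', hQ'sm, haeQ⟩
  -- Cauchy–Schwarz auxiliary
  have haux : ∀ h : G → ℝ≥0∞, Measurable h →
      (∫⁻ g, h g ∂lam) ^ (2 : ℝ) ≤ ∫⁻ g, h g ^ (2 : ℝ) ∂lam := by
    intro h hm
    have hconj : Real.HolderConjugate 2 2 := Real.HolderConjugate.two_two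
    have := ENNReal.lintegral_mul_le_Lp_mul_Lq lam hconj hm.aemeasurable
      (aemeasurable_const (b := (1 : ℝ≥0∞)))
    simp only [Pi.mul_apply, mul_one, ENNReal.one_rpow, lintegral_const, measure_univ,
      ENNReal.one_rpow, one_mul] at this
    calc (∫⁻ g, h g ∂lam) ^ (2 : ℝ)
        ≤ ((∫⁻ g, h g ^ (2:ℝ) ∂lam) ^ (1 / 2 : ℝ)) ^ (2 : ℝ) :=
          ENNReal.rpow_le_rpow this (by norm_num)
      _ = ∫⁻ g, h g ^ (2:ℝ) ∂lam := by
          rw [← ENNReal.rpow_mul]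
          norm_num
  -- pointwise bound
  have hpt : ∀ x, (‖Q' x‖₊ : ℝ≥0∞) ^ (2 : ℝ) ≤
      ∫⁻ g, (‖f' (φ g x)‖₊ : ℝ≥0∞) ^ (2 : ℝ) ∂lam := by
    intro x
    have hle : (‖Q' x‖₊ : ℝ≥0∞) ≤ ∫⁻ g, (‖f' (φ g x)‖₊ : ℝ≥0∞) ∂lam := by
      refine (enorm_integral_le_lintegral_enorm _).trans_eq ?_
      refine lintegral_congr fun g => ?_
      simp [hΦ'def, enorm_eq_nnnorm]
    have hm : Measurable fun g : G => (‖f' (φ g x)‖₊ : ℝ≥0∞) :=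
      ((hf'm.comp (hφ_meas.comp (measurable_id.prodMk measurable_const))).nnnorm).coe_nnreal_ennreal
    exact le_trans (ENNReal.rpow_le_rpow hle (by norm_num)) (haux _ hm)
  -- integral identity via Fubini and invariance
  have hNm : Measurable fun p : G × X => (‖f' (φ p.1 p.2)‖₊ : ℝ≥0∞) ^ (2 : ℝ) :=
    ((hf'm.comp hφ_meas).nnnorm.coe_nnreal_ennreal).pow_const _
  have h2 : (∫⁻ x, ∫⁻ g, (‖f' (φ g x)‖₊ : ℝ≥0∞) ^ (2 : ℝ) ∂lam ∂μ)
      = ∫⁻ x, (‖f x‖₊ : ℝ≥0∞) ^ (2 : ℝ) ∂μ := by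
    rw [lintegral_lintegral_swap]
    · have hinner : ∀ g : G, (∫⁻ x, (‖f' (φ g x)‖₊ : ℝ≥0∞) ^ (2 : ℝ) ∂μ)
          = ∫⁻ x, (‖f x‖₊ : ℝ≥0∞) ^ (2 : ℝ) ∂μ := by
        intro g
        have hFm : Measurable fun y : X => (‖f' y‖₊ : ℝ≥0∞) ^ (2 : ℝ) :=
          (hf'm.nnnorm.coe_nnreal_ennreal).pow_const _
        calc (∫⁻ x, (‖f' (φ g x)‖₊ : ℝ≥0∞) ^ (2 : ℝ) ∂μ)
            = ∫⁻ y, (‖f' y‖₊ : ℝ≥0∞) ^ (2 : ℝ) ∂(Measure.map (φ g) μ) :=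
              (lintegral_map hFm (hφg g)).symm
          _ = ∫⁻ y, (‖f' y‖₊ : ℝ≥0∞) ^ (2 : ℝ) ∂μ := by rw [hμ_inv g]
          _ = ∫⁻ y, (‖f y‖₊ : ℝ≥0∞) ^ (2 : ℝ) ∂μ := by
              refine lintegral_congr_ae ?_
              filter_upwards [hff'] with y hy
              rw [hy]
      simp only [fun g => hinner g]
      simp [lintegral_const]
    · exact (hNm.comp measurable_swap).aemeasurable
  have hQle : (∫⁻ x, (‖Q' x‖₊ : ℝ≥0∞) ^ (2 : ℝ) ∂μ) ≤ ∫⁻ x, (‖f x‖₊ : ℝ≥0∞) ^ (2 : ℝ) ∂μ :=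
    (lintegral_mono hpt).trans_eq h2
  have hNorm : eLpNorm Q' 2 μ ≤ eLpNorm f 2 μ := by
    rw [eLpNorm_eq_lintegral_rpow_enorm_toReal two_ne_zero ENNReal.ofNat_ne_top,
      eLpNorm_eq_lintegral_rpow_enorm_toReal two_ne_zero ENNReal.ofNat_ne_top]
    simp only [ENNReal.toReal_ofNat]
    exact ENNReal.rpow_le_rpow hQle (by norm_num)
  have he : eLpNorm (avgQ lam φ ψ f) 2 μ = eLpNorm Q' 2 μ := eLpNorm_congr_ae haeQ
  refine ⟨haesm, ⟨haesm, ?_⟩, ?_⟩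
  · rw [he]
    exact hNorm.trans_lt hf.2
  · rw [he]
    exact hNorm
end

section
/- Let S and A be, respectively, the set of G-equivariant functions in L2(X,Y,μ) and the set of f ∈ L2(X,Y,μ) with Qf = 0. For every f ∈ L2(X,Y,μ), the averaged function f̄ = Qf is the unique solution (as an element of L2) of the least squares problem argmin_{s ∈ S} ‖f − s‖_μ², i.e., ‖f − f̄‖_μ ≤ ‖f − s‖_μ for all s ∈ S, with equality only if s = f̄ in L2(X,Y,μ). -/
open MeasureTheory
open scoped ENNReal

lemma int_inner_L2 {α : Type*} [MeasurableSpace α] {μ : Measure α} {E : Type*}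
    [NormedAddCommGroup E] [InnerProductSpace ℝ E] {f g : α → E}
    (hf : MemLp f 2 μ) (hg : MemLp g 2 μ) :
    Integrable (fun x => (inner ℝ (f x) (g x) : ℝ)) μ := by
  rw [← memLp_one_iff_integrable]
  refine ⟨hf.1.inner hg.1, ?_⟩
  calc eLpNorm (fun x => (inner ℝ (f x) (g x) : ℝ)) 1 μ
      ≤ eLpNorm f 2 μ * eLpNorm g 2 μ :=
        by
          haveI : ENNReal.HolderTriple 2 2 1 := by
            rw [← ENNReal.HolderConjugate, ENNReal.holderConjugate_iff]
            exact ENNReal.inv_two_add_inv_two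
          have := eLpNorm_le_eLpNorm_mul_eLpNorm'_of_norm (p := 2) (q := 2) (r := 1) hf.1 hg.1
            (fun a b => (inner ℝ a b : ℝ)) 1
            (Filter.Eventually.of_forall fun x => by
              simpa using norm_inner_le_norm (𝕜 := ℝ) (f x) (g x))
          simpa using this
    _ < ⊤ := ENNReal.mul_lt_top hf.2 hg.2

lemma sq_integral_le_int_sq {α : Type*} [MeasurableSpace α] {μ : Measure α}
    [IsProbabilityMeasure μ] {u : α → ℝ} (hu : MemLp u 2 μ) :
    (∫ x, u x ∂μ) ^ 2 ≤ ∫ x, (u x) ^ 2 ∂μ := by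
  have h := ProbabilityTheory.variance_nonneg u μ
  rw [ProbabilityTheory.variance_eq_sub hu] at h
  simp only [Pi.pow_apply] at h ⊢
  linarith


/-- Feature averaging solves a least squares problem: `Q f` is the unique (as an
element of `L2`) closest `G`-equivariant function to `f` in `L2(X,Y,μ)`. -/
theorem stmt_4 {G X : Type*} [Group G] [TopologicalSpace G] [IsTopologicalGroup G]
    [CompactSpace G] [SecondCountableTopology G] [T2Space G]
    [MeasurableSpace G] [BorelSpace G]
    [TopologicalSpace X] [PolishSpace X] [MeasurableSpace X] [BorelSpace X]
    {k : ℕ}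
    (lam : Measure G) [IsProbabilityMeasure lam]
    (hlam_left : ∀ g : G, Measure.map (fun h => g * h) lam = lam)
    (hlam_right : ∀ g : G, Measure.map (fun h => h * g) lam = lam)
    (hlam_inv : Measure.map (fun g : G => g⁻¹) lam = lam)
    (φ : G → X → X)
    (hφ_meas : Measurable fun p : G × X => φ p.1 p.2)
    (hφ_one : ∀ x, φ 1 x = x)
    (hφ_mul : ∀ g h x, φ (g * h) x = φ g (φ h x))
    (ψ : G → (EuclideanSpace ℝ (Fin k) ≃ₗᵢ[ℝ] EuclideanSpace ℝ (Fin k)))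
    (hψ_meas : Measurable fun p : G × EuclideanSpace ℝ (Fin k) => ψ p.1 p.2)
    (hψ_one : ∀ v, ψ 1 v = v)
    (hψ_mul : ∀ g h v, ψ (g * h) v = ψ g (ψ h v))
    (μ : Measure X) [IsProbabilityMeasure μ]
    (hμ_inv : ∀ g : G, Measure.map (φ g) μ = μ)
    (f : X → EuclideanSpace ℝ (Fin k))
    (hf : MemLp f 2 μ) :
    IsEquivariant φ ψ (avgQ lam φ ψ f) ∧
    MemLp (avgQ lam φ ψ f) 2 μ ∧
    ∀ s : X → EuclideanSpace ℝ (Fin k), MemLp s 2 μ → IsEquivariant φ ψ s →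
      (∫ x, ‖f x - avgQ lam φ ψ f x‖ ^ 2 ∂μ ≤ ∫ x, ‖f x - s x‖ ^ 2 ∂μ ∧
        (∫ x, ‖f x - s x‖ ^ 2 ∂μ = ∫ x, ‖f x - avgQ lam φ ψ f x‖ ^ 2 ∂μ →
          s =ᵐ[μ] avgQ lam φ ψ f)) := by
  -- ψ basics
  have hψ_symm : ∀ (g : G) (v : EuclideanSpace ℝ (Fin k)), (ψ g).symm v = ψ g⁻¹ v := by
    intro g v
    have h1 : ψ g (ψ g⁻¹ v) = v := by rw [← hψ_mul, mul_inv_cancel, hψ_one]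
    calc (ψ g).symm v = (ψ g).symm (ψ g (ψ g⁻¹ v)) := by rw [h1]
      _ = ψ g⁻¹ v := (ψ g).symm_apply_apply _
  have hφg_meas : ∀ g : G, Measurable (φ g) := fun g =>
    hφ_meas.comp (measurable_const.prodMk measurable_id)
  have hφ_mp : ∀ g : G, MeasurePreserving (φ g) μ μ := fun g => ⟨hφg_meas g, hμ_inv g⟩
  have hψsymm_meas : Measurable fun p : G × (EuclideanSpace ℝ (Fin k)) => (ψ p.1).symm p.2 := by
    have he : (fun p : G × (EuclideanSpace ℝ (Fin k)) => (ψ p.1).symm p.2)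
        = fun p => ψ p.1⁻¹ p.2 := funext fun p => hψ_symm _ _
    rw [he]
    exact hψ_meas.comp ((measurable_fst.inv).prodMk measurable_snd)
  -- Part 1 : equivariance, for arbitrary f
  have hequiv : ∀ f₁ : X → EuclideanSpace ℝ (Fin k), IsEquivariant φ ψ (avgQ lam φ ψ f₁) := by
    intro f₁ h x
    have hmp : MeasurePreserving (fun g : G => g * h) lam lam :=
      ⟨measurable_mul_const h, hlam_right h⟩
    have hmp' : MeasurePreserving (MeasurableEquiv.mulRight h : G ≃ᵐ G) lam lam := hmp
    have step1 : avgQ lam φ ψ f₁ (φ h x)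
        = ∫ g, (fun t => ψ h ((ψ t).symm (f₁ (φ t x)))) ((MeasurableEquiv.mulRight h) g) ∂lam := by
      unfold avgQ
      congr 1
      funext g
      simp only [MeasurableEquiv.mulRight, MeasurableEquiv.coe_mk, Equiv.coe_fn_mk, Equiv.coe_mulRight]
      rw [← hφ_mul, hψ_symm, hψ_symm, ← hψ_mul]
      congr 2
      group
    rw [step1, hmp'.integral_comp' (fun t => ψ h ((ψ t).symm (f₁ (φ t x))))]
    exact ((ψ h).toLinearIsometry.integral_comp_comm _)
  refine ⟨hequiv f, ?_⟩
  -- measurable representative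
  set f₀ : X → EuclideanSpace ℝ (Fin k) := hf.1.mk f with hf₀def
  have hf₀sm : StronglyMeasurable f₀ := hf.1.stronglyMeasurable_mk
  have hff₀ : f =ᵐ[μ] f₀ := hf.1.ae_eq_mk
  have hf₀ : MemLp f₀ 2 μ := hf.ae_eq hff₀
  have hf₀meas : Measurable f₀ := hf₀sm.measurable
  -- the kernel function
  set F : G × X → EuclideanSpace ℝ (Fin k) := fun p => (ψ p.1).symm (f₀ (φ p.1 p.2)) with hFdef
  have hF_meas : Measurable F := hψsymm_meas.comp (measurable_fst.prodMk (hf₀meas.comp hφ_meas))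
  have hF_sm : StronglyMeasurable F := hF_meas.stronglyMeasurable
  have hFnorm : ∀ p : G × X, ‖F p‖ = ‖f₀ (φ p.1 p.2)‖ := fun p => (ψ p.1).symm.norm_map _
  -- integrability of ‖F‖² on the product measure
  have hsq_int : Integrable (fun x => ‖f₀ x‖ ^ 2) μ :=
    (memLp_two_iff_integrable_sq_norm hf₀sm.aestronglyMeasurable).1 hf₀
  have hslice : ∀ g : G, Integrable (fun x => ‖f₀ (φ g x)‖ ^ 2) μ := fun g =>
    (memLp_two_iff_integrable_sq_norm
      ((hf₀.comp_measurePreserving (hφ_mp g)).aestronglyMeasurable)).1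
      (hf₀.comp_measurePreserving (hφ_mp g))
  have hconst : ∀ g : G, ∫ x, ‖f₀ (φ g x)‖ ^ 2 ∂μ = ∫ x, ‖f₀ x‖ ^ 2 ∂μ := by
    intro g
    have hsm : AEStronglyMeasurable (fun x => ‖f₀ x‖ ^ 2) (Measure.map (φ g) μ) := by
      rw [hμ_inv g]; exact (hf₀meas.norm.pow_const 2).aestronglyMeasurable
    have := integral_map (hφg_meas g).aemeasurable hsm
    rw [hμ_inv g] at this
    exact this.symm
  have hF2 : Integrable (fun p : G × X => ‖F p‖ ^ 2) (lam.prod μ) := by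
    have hFsm2 : AEStronglyMeasurable (fun p : G × X => ‖F p‖ ^ 2) (lam.prod μ) :=
      (hF_meas.norm.pow_const 2).aestronglyMeasurable
    refine (integrable_prod_iff hFsm2).2 ⟨?_, ?_⟩
    · refine Filter.Eventually.of_forall fun g => ?_
      have : (fun x => ‖F (g, x)‖ ^ 2) = fun x => ‖f₀ (φ g x)‖ ^ 2 := by
        funext x; rw [hFnorm]
      rw [this]; exact hslice g
    · have : (fun g => ∫ x, ‖‖F (g, x)‖ ^ 2‖ ∂μ) = fun _ => ∫ x, ‖f₀ x‖ ^ 2 ∂μ := by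
        funext g
        have : (fun x => ‖‖F (g, x)‖ ^ 2‖) = fun x => ‖f₀ (φ g x)‖ ^ 2 := by
          funext x; rw [Real.norm_of_nonneg (sq_nonneg _), hFnorm]
        rw [this, hconst g]
      rw [this]; exact integrable_const _
  have hFL2 : MemLp F 2 (lam.prod μ) :=
    (memLp_two_iff_integrable_sq_norm hF_sm.aestronglyMeasurable).2 hF2
  have hFint : Integrable F (lam.prod μ) := hFL2.integrable one_le_two
  -- strong measurability of avgQ f₀
  have hQf₀sm : StronglyMeasurable (avgQ lam φ ψ f₀) := by
    exact StronglyMeasurable.integral_prod_left' (μ := lam) hF_sm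
  -- avgQ f =ᵐ avgQ f₀
  have hnull : μ {x | f x ≠ f₀ x} = 0 := ae_iff.1 hff₀
  obtain ⟨N, hsub, hNm, hN0⟩ := exists_measurable_superset_of_null hnull
  have hSnull : (lam.prod μ) {p : G × X | φ p.1 p.2 ∈ N} = 0 := by
    have hSm : MeasurableSet {p : G × X | φ p.1 p.2 ∈ N} := hφ_meas hNm
    rw [Measure.prod_apply hSm]
    have hz : ∀ g : G, μ {a : X | φ g a ∈ N} = 0 := by
      intro g
      have he : {a : X | φ g a ∈ N} = φ g ⁻¹' N := rfl
      rw [he, ← Measure.map_apply (hφg_meas g) hNm, hμ_inv g]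
      exact hN0
    simp only [Set.mem_setOf_eq, Set.preimage_setOf_eq]
    simp [hz]
  have hprod_ae : ∀ᵐ p ∂(lam.prod μ), f (φ p.1 p.2) = f₀ (φ p.1 p.2) := by
    have hninN : ∀ᵐ p ∂(lam.prod μ), φ p.1 p.2 ∉ N := by
      rw [ae_iff]
      simpa only [not_not] using hSnull
    filter_upwards [hninN] with p hp
    by_contra hc
    exact hp (hsub hc)
  have hswap : ∀ᵐ q ∂(μ.prod lam), f (φ q.2 q.1) = f₀ (φ q.2 q.1) :=
    (Measure.measurePreserving_swap (μ := μ) (ν := lam)).quasiMeasurePreserving.ae hprod_ae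
  have hae_x : ∀ᵐ x ∂μ, ∀ᵐ g ∂lam, f (φ g x) = f₀ (φ g x) :=
    Measure.ae_ae_of_ae_prod hswap
  have hQeq : avgQ lam φ ψ f =ᵐ[μ] avgQ lam φ ψ f₀ := by
    filter_upwards [hae_x] with x hx
    unfold avgQ
    refine integral_congr_ae ?_
    filter_upwards [hx] with g hg
    rw [hg]
  -- MemLp of avgQ f₀, via Jensen
  have hD_int : Integrable (fun x => ∫ g, ‖F (g, x)‖ ^ 2 ∂lam) μ := hF2.integral_prod_right
  have hbound : ∀ᵐ x ∂μ, ‖avgQ lam φ ψ f₀ x‖ ^ 2 ≤ ∫ g, ‖F (g, x)‖ ^ 2 ∂lam := by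
    filter_upwards [hF2.prod_left_ae, hFint.prod_left_ae] with x h2 h1
    have e1 : ‖avgQ lam φ ψ f₀ x‖ ≤ ∫ g, ‖F (g, x)‖ ∂lam := by
      unfold avgQ; exact norm_integral_le_integral_norm _
    have hu2 : MemLp (fun g => ‖F (g, x)‖) 2 lam := by
      refine (memLp_two_iff_integrable_sq_norm h1.aestronglyMeasurable.norm).2 ?_
      simpa only [Real.norm_of_nonneg (norm_nonneg _)] using h2
    have e2 : (∫ g, ‖F (g, x)‖ ∂lam) ^ 2 ≤ ∫ g, ‖F (g, x)‖ ^ 2 ∂lam :=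
      sq_integral_le_int_sq hu2
    calc ‖avgQ lam φ ψ f₀ x‖ ^ 2 ≤ (∫ g, ‖F (g, x)‖ ∂lam) ^ 2 :=
          pow_le_pow_left₀ (norm_nonneg _) e1 2
      _ ≤ _ := e2
  have hQf₀mem : MemLp (avgQ lam φ ψ f₀) 2 μ := by
    rw [memLp_two_iff_integrable_sq_norm hQf₀sm.aestronglyMeasurable]
    refine Integrable.mono' hD_int
      ((hQf₀sm.measurable.norm.pow_const 2).aestronglyMeasurable) ?_
    filter_upwards [hbound] with x hx
    rwa [Real.norm_of_nonneg (sq_nonneg _)]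
  have hQmem : MemLp (avgQ lam φ ψ f) 2 μ := hQf₀mem.ae_eq hQeq.symm
  refine ⟨hQmem, ?_⟩
  -- orthogonality: ⟪f - Qf, h⟫_μ = 0 for every equivariant h ∈ L²
  have key : ∀ h : X → EuclideanSpace ℝ (Fin k), MemLp h 2 μ → IsEquivariant φ ψ h →
      ∫ x, (inner ℝ (f x - avgQ lam φ ψ f x) (h x) : ℝ) ∂μ = 0 := by
    intro h hh2 hhE
    set h₀ := hh2.1.mk h with hh₀def
    have hh₀sm : StronglyMeasurable h₀ := hh2.1.stronglyMeasurable_mk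
    have hhh₀ : h =ᵐ[μ] h₀ := hh2.1.ae_eq_mk
    have hh₀ : MemLp h₀ 2 μ := hh2.ae_eq hhh₀
    have hsnd_mp : MeasurePreserving (Prod.snd : G × X → X) (lam.prod μ) μ := by
      refine ⟨measurable_snd, ?_⟩
      simp [Measure.map_snd_prod]
    have hh₀prod : MemLp (fun p : G × X => h₀ p.2) 2 (lam.prod μ) :=
      hh₀.comp_measurePreserving hsnd_mp
    have hInner_int : Integrable (fun p : G × X => (inner ℝ (F p) (h₀ p.2) : ℝ)) (lam.prod μ) :=
      int_inner_L2 hFL2 hh₀prod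
    have hptwise : ∀ᵐ x ∂μ, (inner ℝ (avgQ lam φ ψ f₀ x) (h₀ x) : ℝ)
        = ∫ g, (inner ℝ (F (g, x)) (h₀ x) : ℝ) ∂lam := by
      filter_upwards [hFint.prod_left_ae] with x h1
      calc (inner ℝ (avgQ lam φ ψ f₀ x) (h₀ x) : ℝ)
          = inner ℝ (h₀ x) (avgQ lam φ ψ f₀ x) := real_inner_comm _ _
        _ = ∫ g, (inner ℝ (h₀ x) (F (g, x)) : ℝ) ∂lam := (integral_inner h1 (h₀ x)).symm
        _ = ∫ g, (inner ℝ (F (g, x)) (h₀ x) : ℝ) ∂lam :=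
            integral_congr_ae (Filter.Eventually.of_forall fun g => real_inner_comm _ _)
    have hfub : ∫ x, ∫ g, (inner ℝ (F (g, x)) (h₀ x) : ℝ) ∂lam ∂μ
        = ∫ g, ∫ x, (inner ℝ (F (g, x)) (h₀ x) : ℝ) ∂μ ∂lam := by
      exact integral_integral_swap hInner_int.swap
    have hfix : ∀ g : G, ∫ x, (inner ℝ (F (g, x)) (h₀ x) : ℝ) ∂μ
        = ∫ x, (inner ℝ (f₀ x) (h₀ x) : ℝ) ∂μ := by
      intro g
      have h1 : ∀ᵐ x ∂μ, (inner ℝ (F (g, x)) (h₀ x) : ℝ)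
          = inner ℝ (f₀ (φ g x)) (h₀ (φ g x)) := by
        have hcomp : (fun x => h₀ (φ g x)) =ᵐ[μ] fun x => h (φ g x) := by
          have hmap : h =ᵐ[Measure.map (φ g) μ] h₀ := by rw [hμ_inv g]; exact hhh₀
          exact (ae_eq_comp (hφg_meas g).aemeasurable hmap).symm
        filter_upwards [hcomp, hhh₀] with x hx1 hx2
        have hflip : (inner ℝ (F (g, x)) (h₀ x) : ℝ) = inner ℝ (f₀ (φ g x)) (ψ g (h₀ x)) := by
          show (inner ℝ ((ψ g).symm (f₀ (φ g x))) (h₀ x) : ℝ) = _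
          rw [(ψ g).symm.inner_map_eq_flip, LinearIsometryEquiv.symm_symm]
        rw [hflip, ← hx2, ← hhE g x, hx1]
      rw [integral_congr_ae h1]
      have hsm : AEStronglyMeasurable (fun x => (inner ℝ (f₀ x) (h₀ x) : ℝ))
          (Measure.map (φ g) μ) := by
        rw [hμ_inv g]
        exact hf₀sm.aestronglyMeasurable.inner hh₀sm.aestronglyMeasurable
      have hm := integral_map (hφg_meas g).aemeasurable hsm
      rw [hμ_inv g] at hm
      exact hm.symm
    have horth₀ : ∫ x, (inner ℝ (avgQ lam φ ψ f₀ x) (h₀ x) : ℝ) ∂μ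
        = ∫ x, (inner ℝ (f₀ x) (h₀ x) : ℝ) ∂μ := by
      calc ∫ x, (inner ℝ (avgQ lam φ ψ f₀ x) (h₀ x) : ℝ) ∂μ
          = ∫ x, ∫ g, (inner ℝ (F (g, x)) (h₀ x) : ℝ) ∂lam ∂μ := integral_congr_ae hptwise
        _ = ∫ g, ∫ x, (inner ℝ (F (g, x)) (h₀ x) : ℝ) ∂μ ∂lam := hfub
        _ = ∫ (_ : G), (∫ x, (inner ℝ (f₀ x) (h₀ x) : ℝ) ∂μ) ∂lam :=
            integral_congr_ae (Filter.Eventually.of_forall fun g => hfix g)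
        _ = ∫ x, (inner ℝ (f₀ x) (h₀ x) : ℝ) ∂μ := by simp
    have hcongr : ∫ x, (inner ℝ (f x - avgQ lam φ ψ f x) (h x) : ℝ) ∂μ
        = ∫ x, ((inner ℝ (f₀ x) (h₀ x) : ℝ) - (inner ℝ (avgQ lam φ ψ f₀ x) (h₀ x) : ℝ)) ∂μ := by
      refine integral_congr_ae ?_
      filter_upwards [hff₀, hhh₀, hQeq] with x h1 h2 h3
      rw [h1, h2, h3, inner_sub_left]
    rw [hcongr, integral_sub (int_inner_L2 hf₀ hh₀) (int_inner_L2 hQf₀mem hh₀), horth₀, sub_self]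
  -- the least squares conclusion
  intro s hs2 hsE
  have hbE : IsEquivariant φ ψ (fun x => avgQ lam φ ψ f x - s x) := by
    intro g x
    simp only
    rw [hequiv f g x, hsE g x, ← map_sub]
  have hb2 : MemLp (fun x => avgQ lam φ ψ f x - s x) 2 μ := hQmem.sub hs2
  have horth := key (fun x => avgQ lam φ ψ f x - s x) hb2 hbE
  have hA2 : Integrable (fun x => ‖f x - avgQ lam φ ψ f x‖ ^ 2) μ :=
    (memLp_two_iff_integrable_sq_norm (hf.sub hQmem).aestronglyMeasurable).1 (hf.sub hQmem)
  have hB2 : Integrable (fun x => ‖avgQ lam φ ψ f x - s x‖ ^ 2) μ :=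
    (memLp_two_iff_integrable_sq_norm hb2.aestronglyMeasurable).1 hb2
  have hAB : Integrable
      (fun x => (inner ℝ (f x - avgQ lam φ ψ f x) (avgQ lam φ ψ f x - s x) : ℝ)) μ :=
    int_inner_L2 (hf.sub hQmem) hb2
  have hexp : ∫ x, ‖f x - s x‖ ^ 2 ∂μ
      = ∫ x, ‖f x - avgQ lam φ ψ f x‖ ^ 2 ∂μ + ∫ x, ‖avgQ lam φ ψ f x - s x‖ ^ 2 ∂μ := by
    have hpt : ∀ x, ‖f x - s x‖ ^ 2
        = ‖f x - avgQ lam φ ψ f x‖ ^ 2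
          + 2 * (inner ℝ (f x - avgQ lam φ ψ f x) (avgQ lam φ ψ f x - s x) : ℝ)
          + ‖avgQ lam φ ψ f x - s x‖ ^ 2 := by
      intro x
      have hdec : f x - s x = (f x - avgQ lam φ ψ f x) + (avgQ lam φ ψ f x - s x) := by abel
      rw [hdec, norm_add_sq_real]
    have i1 : Integrable (fun x => ‖f x - avgQ lam φ ψ f x‖ ^ 2
        + 2 * (inner ℝ (f x - avgQ lam φ ψ f x) (avgQ lam φ ψ f x - s x) : ℝ)) μ :=
      hA2.add (hAB.const_mul 2)
    have i2 : Integrable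
        (fun x => 2 * (inner ℝ (f x - avgQ lam φ ψ f x) (avgQ lam φ ψ f x - s x) : ℝ)) μ :=
      hAB.const_mul 2
    rw [integral_congr_ae (Filter.Eventually.of_forall hpt),
      integral_add i1 hB2, integral_add hA2 i2, MeasureTheory.integral_const_mul, horth]
    ring
  refine ⟨?_, ?_⟩
  · rw [hexp]
    exact le_add_of_nonneg_right (integral_nonneg fun x => sq_nonneg _)
  · intro heq
    rw [hexp] at heq
    have hzero : ∫ x, ‖avgQ lam φ ψ f x - s x‖ ^ 2 ∂μ = 0 := by linarith
    have hz := (integral_eq_zero_iff_of_nonneg (fun x => sq_nonneg _) hB2).1 hzero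
    filter_upwards [hz] with x hx
    have hx' : ‖avgQ lam φ ψ f x - s x‖ ^ 2 = 0 := hx
    have hn : ‖avgQ lam φ ψ f x - s x‖ = 0 := sq_eq_zero_iff.1 hx'
    have hsub : avgQ lam φ ψ f x - s x = 0 := norm_eq_zero.1 hn
    have := sub_eq_zero.1 hsub
    exact this.symm
end

section
/- Let X ~ μ and Y = f⋆(X) + ξ in ℝ^k, where f⋆ ∈ L2(X,Y,μ) is G-equivariant, ξ is independent of X with E[ξ] = 0 and E[‖ξ‖²] < ∞. Define the risk R[h] = E[‖h(X) − Y‖²]. Let f ∈ L2(X,Y,μ), write f̄ = Qf and f⊥ = f − f̄, and let f′ ∈ L2(X,Y,μ) be any predictor with R[f′] ≤ R[f̄]. Then R[f] − R[f′] ≥ ‖f⊥‖_μ², with equality when R[f′] = R[f̄]. In particular, if f is not G-equivariant (as an element of L2) then R[f] − R[f̄] > 0. -/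
open MeasureTheory
open scoped ENNReal

section helpers

variable {α : Type*} [MeasurableSpace α] {k : ℕ}

lemma helper_integrable_sq {ν : Measure α} {u : α → EuclideanSpace ℝ (Fin k)}
    (hu : MemLp u 2 ν) : Integrable (fun x => ‖u x‖ ^ 2) ν :=
  (memLp_two_iff_integrable_sq_norm hu.1).1 hu

lemma helper_integrable_inner {ν : Measure α} {u v : α → EuclideanSpace ℝ (Fin k)}
    (hu : MemLp u 2 ν) (hv : MemLp v 2 ν) :
    Integrable (fun x => (inner ℝ (u x) (v x) : ℝ)) ν := by
  refine Integrable.mono' (((helper_integrable_sq hu).add (helper_integrable_sq hv)).div_const 2)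
    (hu.1.inner hv.1) (Filter.Eventually.of_forall fun x => ?_)
  have h1 : ‖(inner ℝ (u x) (v x) : ℝ)‖ ≤ ‖u x‖ * ‖v x‖ := norm_inner_le_norm _ _
  have h2 : ‖u x‖ * ‖v x‖ ≤ (‖u x‖ ^ 2 + ‖v x‖ ^ 2) / 2 := by
    nlinarith [sq_nonneg (‖u x‖ - ‖v x‖)]
  calc ‖(inner ℝ (u x) (v x) : ℝ)‖ ≤ ‖u x‖ * ‖v x‖ := h1
    _ ≤ (‖u x‖ ^ 2 + ‖v x‖ ^ 2) / 2 := h2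

lemma helper_abs_coord_le (u : EuclideanSpace ℝ (Fin k)) (i : Fin k) : |u i| ≤ ‖u‖ := by
  rw [EuclideanSpace.norm_eq]
  calc |u i| = Real.sqrt (‖u i‖ ^ 2) := by
        rw [Real.sqrt_sq_eq_abs, abs_norm, Real.norm_eq_abs]
    _ ≤ _ := Real.sqrt_le_sqrt
        (Finset.single_le_sum (f := fun j => ‖u j‖ ^ 2) (fun j _ => sq_nonneg _)
          (Finset.mem_univ i))

lemma helper_sq_lintegral_le {ν : Measure α} [IsProbabilityMeasure ν] {u : α → ℝ≥0∞}
    (hu : AEMeasurable u ν) : (∫⁻ a, u a ∂ν) ^ 2 ≤ ∫⁻ a, u a ^ 2 ∂ν := by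
  have hpq : Real.HolderConjugate 2 2 := Real.HolderConjugate.two_two
  have h := ENNReal.lintegral_mul_le_Lp_mul_Lq ν hpq hu (aemeasurable_const (b := (1 : ℝ≥0∞)))
  simp only [Pi.mul_apply, mul_one, ENNReal.one_rpow, lintegral_one, measure_univ] at h
  have h' : ∫⁻ a, u a ∂ν ≤ (∫⁻ a, u a ^ (2 : ℝ) ∂ν) ^ (1 / 2 : ℝ) := by
    simpa using h
  have h2 : (∫⁻ a, u a ∂ν) ^ 2 ≤ ((∫⁻ a, u a ^ (2 : ℝ) ∂ν) ^ (1 / 2 : ℝ)) ^ 2 :=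
    pow_le_pow_left₀ zero_le h' 2
  have h3 : ((∫⁻ a, u a ^ (2 : ℝ) ∂ν) ^ (1 / 2 : ℝ)) ^ 2 = ∫⁻ a, u a ^ (2 : ℝ) ∂ν := by
    rw [← ENNReal.rpow_natCast ((∫⁻ a, u a ^ (2 : ℝ) ∂ν) ^ (1 / 2 : ℝ)) 2,
      ← ENNReal.rpow_mul]
    norm_num
  have h4 : ∀ a, u a ^ (2 : ℝ) = u a ^ 2 := fun a => by
    rw [← ENNReal.rpow_natCast (u a) 2]; norm_num
  rw [h3] at h2
  simpa [h4] using h2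

end helpers

/-- Strict generalisation benefit of equivariance for squared-error regression with
an equivariant target: for any `f' ` with risk at most that of `f̄ = Q f`,
`R[f] − R[f'] ≥ ‖f⊥‖_μ²`, with equality when `R[f'] = R[f̄]`; in particular, if
`f` is not equivariant as an element of `L2` then `R[f] − R[f̄] > 0`. -/
theorem stmt_6 {G X : Type*} [Group G] [TopologicalSpace G] [IsTopologicalGroup G]
    [CompactSpace G] [SecondCountableTopology G] [T2Space G]
    [MeasurableSpace G] [BorelSpace G]
    [TopologicalSpace X] [PolishSpace X] [MeasurableSpace X] [BorelSpace X]
    {k : ℕ}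
    (lam : Measure G) [IsProbabilityMeasure lam]
    (hlam_left : ∀ g : G, Measure.map (fun h => g * h) lam = lam)
    (hlam_right : ∀ g : G, Measure.map (fun h => h * g) lam = lam)
    (hlam_inv : Measure.map (fun g : G => g⁻¹) lam = lam)
    (φ : G → X → X)
    (hφ_meas : Measurable fun p : G × X => φ p.1 p.2)
    (hφ_one : ∀ x, φ 1 x = x)
    (hφ_mul : ∀ g h x, φ (g * h) x = φ g (φ h x))
    (ψ : G → (EuclideanSpace ℝ (Fin k) ≃ₗᵢ[ℝ] EuclideanSpace ℝ (Fin k)))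
    (hψ_meas : Measurable fun p : G × EuclideanSpace ℝ (Fin k) => ψ p.1 p.2)
    (hψ_one : ∀ v, ψ 1 v = v)
    (hψ_mul : ∀ g h v, ψ (g * h) v = ψ g (ψ h v))
    (μ : Measure X) [IsProbabilityMeasure μ]
    (hμ_inv : ∀ g : G, Measure.map (φ g) μ = μ)
    {Ω : Type*} [MeasurableSpace Ω] (P : Measure Ω) [IsProbabilityMeasure P]
    (Xv : Ω → X) (hXv_meas : Measurable Xv) (hXv_law : Measure.map Xv P = μ)
    (ξ : Ω → EuclideanSpace ℝ (Fin k)) (hξ_meas : Measurable ξ)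
    (hξ_indep : ProbabilityTheory.IndepFun Xv ξ P)
    (hξ_mean : ∫ ω, ξ ω ∂P = 0)
    (hξ_L2 : MemLp ξ 2 P)
    (fstar : X → EuclideanSpace ℝ (Fin k))
    (hfstar_L2 : MemLp fstar 2 μ)
    (hfstar_equiv : IsEquivariant φ ψ fstar)
    (f f' : X → EuclideanSpace ℝ (Fin k))
    (hf : MemLp f 2 μ) (hf' : MemLp f' 2 μ)
    (hf'_risk : ∫ ω, ‖f' (Xv ω) - (fstar (Xv ω) + ξ ω)‖ ^ 2 ∂P
      ≤ ∫ ω, ‖avgQ lam φ ψ f (Xv ω) - (fstar (Xv ω) + ξ ω)‖ ^ 2 ∂P) :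
    (∫ x, ‖f x - avgQ lam φ ψ f x‖ ^ 2 ∂μ
        ≤ ∫ ω, ‖f (Xv ω) - (fstar (Xv ω) + ξ ω)‖ ^ 2 ∂P
          - ∫ ω, ‖f' (Xv ω) - (fstar (Xv ω) + ξ ω)‖ ^ 2 ∂P) ∧
    (∫ ω, ‖f' (Xv ω) - (fstar (Xv ω) + ξ ω)‖ ^ 2 ∂P
        = ∫ ω, ‖avgQ lam φ ψ f (Xv ω) - (fstar (Xv ω) + ξ ω)‖ ^ 2 ∂P →
      ∫ ω, ‖f (Xv ω) - (fstar (Xv ω) + ξ ω)‖ ^ 2 ∂P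
          - ∫ ω, ‖f' (Xv ω) - (fstar (Xv ω) + ξ ω)‖ ^ 2 ∂P
        = ∫ x, ‖f x - avgQ lam φ ψ f x‖ ^ 2 ∂μ) ∧
    (¬ (f =ᵐ[μ] avgQ lam φ ψ f) →
      0 < ∫ ω, ‖f (Xv ω) - (fstar (Xv ω) + ξ ω)‖ ^ 2 ∂P
          - ∫ ω, ‖avgQ lam φ ψ f (Xv ω) - (fstar (Xv ω) + ξ ω)‖ ^ 2 ∂P) := by
  classical
  have hXvP : MeasurePreserving Xv P μ := ⟨hXv_meas, hXv_law⟩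
  have haeXv : ∀ {p : X → Prop}, (∀ᵐ x ∂μ, p x) → ∀ᵐ ω ∂P, p (Xv ω) := by
    intro p hp
    exact ae_of_ae_map hXv_meas.aemeasurable (by rw [hXv_law]; exact hp)
  -- measurable representative of f
  obtain ⟨f₀, hf₀sm, hff₀⟩ : ∃ f₀, StronglyMeasurable f₀ ∧ f =ᵐ[μ] f₀ :=
    ⟨hf.1.mk f, hf.1.stronglyMeasurable_mk, hf.1.ae_eq_mk⟩
  have hf₀m : Measurable f₀ := hf₀sm.measurable
  have hf₀ : MemLp f₀ 2 μ := hf.ae_eq hff₀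
  have hφg_meas : ∀ g : G, Measurable (φ g) := fun g =>
    hφ_meas.comp (measurable_const.prodMk measurable_id)
  have hψsymm : ∀ (g : G) (v), (ψ g).symm v = ψ g⁻¹ v := by
    intro g v
    apply (ψ g).injective
    rw [LinearIsometryEquiv.apply_symm_apply, ← hψ_mul, mul_inv_cancel, hψ_one]
  have hmap_prod : Measure.map (fun q : G × X => φ q.1 q.2) (lam.prod μ) = μ := by
    ext A hA
    rw [Measure.map_apply hφ_meas hA, Measure.prod_apply (hφ_meas hA)]
    have h1 : ∀ g : G, μ (Prod.mk g ⁻¹' ((fun q : G × X => φ q.1 q.2) ⁻¹' A)) = μ A := by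
      intro g
      have he : (Prod.mk g ⁻¹' ((fun q : G × X => φ q.1 q.2) ⁻¹' A)) = φ g ⁻¹' A := rfl
      rw [he, ← Measure.map_apply (hφg_meas g) hA, hμ_inv g]
    simp only [h1]
    simp
  have haeprod : ∀ {p : X → Prop}, (∀ᵐ x ∂μ, p x) →
      ∀ᵐ q ∂(lam.prod μ), p (φ q.1 q.2) := by
    intro p hp
    exact ae_of_ae_map hφ_meas.aemeasurable (by rw [hmap_prod]; exact hp)
  set F : G × X → EuclideanSpace ℝ (Fin k) := fun q => (ψ q.1).symm (f₀ (φ q.1 q.2)) with hF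
  have hF_meas : Measurable F := by
    have he : F = fun q : G × X => (fun p : G × (EuclideanSpace ℝ (Fin k)) => ψ p.1 p.2)
        (q.1⁻¹, f₀ (φ q.1 q.2)) := by
      funext q; simp [hF, hψsymm]
    rw [he]
    exact hψ_meas.comp ((measurable_fst.inv).prodMk (hf₀m.comp hφ_meas))
  set fb : X → EuclideanSpace ℝ (Fin k) := avgQ lam φ ψ f₀ with hfb
  have hfb_eq : ∀ x, fb x = ∫ g, F (g, x) ∂lam := fun x => rfl
  have hfb_sm : StronglyMeasurable fb :=
    hF_meas.stronglyMeasurable.integral_prod_left' (μ := lam)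
  -- avgQ f agrees a.e. with fb
  have hswap : ∀ᵐ x ∂μ, ∀ᵐ g ∂lam, f (φ g x) = f₀ (φ g x) := by
    have h1 : ∀ᵐ q ∂(lam.prod μ), f (φ q.1 q.2) = f₀ (φ q.1 q.2) := haeprod hff₀
    have h2 := ae_of_ae_map (f := (Prod.swap : X × G → G × X)) (μ := μ.prod lam)
      (p := fun q : G × X => f (φ q.1 q.2) = f₀ (φ q.1 q.2))
      measurable_swap.aemeasurable
      (by rw [Measure.prod_swap]; exact h1)
    exact Measure.ae_ae_of_ae_prod h2
  have havg_ae : avgQ lam φ ψ f =ᵐ[μ] fb := by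
    filter_upwards [hswap] with x hx
    show (∫ g, (ψ g).symm (f (φ g x)) ∂lam) = fb x
    rw [hfb_eq x]
    refine integral_congr_ae ?_
    filter_upwards [hx] with g hg
    show (ψ g).symm (f (φ g x)) = (ψ g).symm (f₀ (φ g x))
    rw [hg]
  -- L2 membership of fb
  have hf₀_sqint : Integrable (fun x => ‖f₀ x‖ ^ 2) μ := helper_integrable_sq hf₀
  have hsq_lint : ∫⁻ x, (‖f₀ x‖₊ : ℝ≥0∞) ^ 2 ∂μ < ⊤ := by
    have h := hf₀_sqint.2
    simp only [HasFiniteIntegral, enorm_pow, enorm_norm] at h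
    exact h
  have hprod_lint : ∫⁻ x, ∫⁻ g, (‖f₀ (φ g x)‖₊ : ℝ≥0∞) ^ 2 ∂lam ∂μ < ⊤ := by
    have hm : Measurable fun q : G × X => (‖f₀ (φ q.1 q.2)‖₊ : ℝ≥0∞) ^ 2 :=
      ((hf₀m.comp hφ_meas).enorm).pow_const 2
    rw [← lintegral_prod_symm' _ hm]
    have he : ∫⁻ q, (‖f₀ (φ q.1 q.2)‖₊ : ℝ≥0∞) ^ 2 ∂(lam.prod μ)
        = ∫⁻ x, (‖f₀ x‖₊ : ℝ≥0∞) ^ 2 ∂μ := by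
      rw [← lintegral_map (f := fun x => (‖f₀ x‖₊ : ℝ≥0∞) ^ 2) (hf₀m.enorm.pow_const 2) hφ_meas, hmap_prod]
    rw [he]
    exact hsq_lint
  have hfb_L2 : MemLp fb 2 μ := by
    refine (memLp_two_iff_integrable_sq_norm hfb_sm.aestronglyMeasurable).2 ?_
    refine ⟨((hfb_sm.norm.aestronglyMeasurable.aemeasurable.pow_const 2)).aestronglyMeasurable, ?_⟩
    rw [HasFiniteIntegral]
    refine lt_of_le_of_lt (lintegral_mono fun x => ?_) hprod_lint
    have e1 : ‖(‖fb x‖ ^ 2 : ℝ)‖ₑ = (‖fb x‖₊ : ℝ≥0∞) ^ 2 := by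
      simp [nnnorm_pow, nnnorm_norm, ENNReal.coe_pow, enorm_eq_nnnorm]
    rw [e1]
    have e2 : (‖fb x‖₊ : ℝ≥0∞) ≤ ∫⁻ g, (‖F (g, x)‖₊ : ℝ≥0∞) ∂lam := by
      rw [hfb_eq x]
      exact enorm_integral_le_lintegral_enorm _
    have e3 : ∀ g : G, (‖F (g, x)‖₊ : ℝ≥0∞) = (‖f₀ (φ g x)‖₊ : ℝ≥0∞) := by
      intro g
      simp [hF, LinearIsometryEquiv.nnnorm_map]
    calc (‖fb x‖₊ : ℝ≥0∞) ^ 2 ≤ (∫⁻ g, (‖F (g, x)‖₊ : ℝ≥0∞) ∂lam) ^ 2 :=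
          pow_le_pow_left₀ zero_le e2 2
      _ ≤ ∫⁻ g, (‖F (g, x)‖₊ : ℝ≥0∞) ^ 2 ∂lam :=
          helper_sq_lintegral_le
            ((hF_meas.comp (measurable_id.prodMk measurable_const)).enorm.aemeasurable)
      _ = ∫⁻ g, (‖f₀ (φ g x)‖₊ : ℝ≥0∞) ^ 2 ∂lam := by simp_rw [e3]
  -- equivariance of fb
  have hfb_equiv : IsEquivariant φ ψ fb := by
    intro h x
    have hw_meas : Measurable fun g : G => ψ h ((ψ g).symm (f₀ (φ g x))) :=
      (ψ h).continuous.measurable.comp (hF_meas.comp (measurable_id.prodMk measurable_const))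
    have key : ∀ g : G, (ψ g).symm (f₀ (φ g (φ h x)))
        = (fun g' : G => ψ h ((ψ g').symm (f₀ (φ g' x)))) (g * h) := by
      intro g
      simp only [← hφ_mul, hψsymm, ← hψ_mul]
      congr 2
      group
    have cov : ∫ g, (fun g' : G => ψ h ((ψ g').symm (f₀ (φ g' x)))) (g * h) ∂lam
        = ∫ g', ψ h ((ψ g').symm (f₀ (φ g' x))) ∂lam := by
      have hi := integral_map (μ := lam) (φ := fun g : G => g * h)
        (measurable_mul_const h).aemeasurable
        (f := fun g' : G => ψ h ((ψ g').symm (f₀ (φ g' x))))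
        (by rw [hlam_right h]; exact hw_meas.aestronglyMeasurable)
      rw [hlam_right h] at hi
      exact hi.symm
    calc fb (φ h x) = ∫ g, (ψ g).symm (f₀ (φ g (φ h x))) ∂lam := rfl
      _ = ∫ g, (fun g' : G => ψ h ((ψ g').symm (f₀ (φ g' x)))) (g * h) ∂lam := by
          simp_rw [key]
      _ = ∫ g', ψ h ((ψ g').symm (f₀ (φ g' x))) ∂lam := cov
      _ = ψ h (fb x) := by
          rw [hfb_eq x]
          exact (ψ h).toLinearIsometry.integral_comp_comm _
  -- a.e. integrability of the fibers
  have hF_int_ae : ∀ᵐ x ∂μ, Integrable (fun g => F (g, x)) lam := by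
    have hm : Measurable fun q : G × X => (‖f₀ (φ q.1 q.2)‖₊ : ℝ≥0∞) :=
      (hf₀m.comp hφ_meas).enorm
    have hfin : ∫⁻ x, ∫⁻ g, (‖f₀ (φ g x)‖₊ : ℝ≥0∞) ∂lam ∂μ < ⊤ := by
      rw [← lintegral_prod_symm' _ hm]
      have he : ∫⁻ q, (‖f₀ (φ q.1 q.2)‖₊ : ℝ≥0∞) ∂(lam.prod μ)
          = ∫⁻ x, (‖f₀ x‖₊ : ℝ≥0∞) ∂μ := by
        rw [← lintegral_map (f := fun x => (‖f₀ x‖₊ : ℝ≥0∞)) hf₀m.enorm hφ_meas, hmap_prod]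
      rw [he]
      exact (hf₀.integrable one_le_two).2
    have hmeas2 : Measurable fun x => ∫⁻ g, (‖f₀ (φ g x)‖₊ : ℝ≥0∞) ∂lam :=
      hm.lintegral_prod_left'
    filter_upwards [ae_lt_top hmeas2 hfin.ne] with x hx
    refine ⟨(hF_meas.comp (measurable_id.prodMk measurable_const)).aestronglyMeasurable, ?_⟩
    rw [HasFiniteIntegral]
    have e3 : ∀ g : G, (‖F (g, x)‖₊ : ℝ≥0∞) = (‖f₀ (φ g x)‖₊ : ℝ≥0∞) := by
      intro g
      simp [hF, LinearIsometryEquiv.nnnorm_map]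
    exact (by simpa [e3] using hx : ∫⁻ g, (‖F (g, x)‖₊ : ℝ≥0∞) ∂lam < ⊤)
  -- orthogonality of f₀ - fb to equivariant L2 functions
  have horth : ∀ h : X → EuclideanSpace ℝ (Fin k), IsEquivariant φ ψ h → MemLp h 2 μ →
      ∫ x, (inner ℝ (f₀ x - fb x) (h x) : ℝ) ∂μ = 0 := by
    intro h hequiv hh
    have hK_int : Integrable (fun x => (inner ℝ (f₀ x) (h x) : ℝ)) μ :=
      helper_integrable_inner hf₀ hh
    have hK_asm' : AEStronglyMeasurable (fun x => (inner ℝ (f₀ x) (h x) : ℝ))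
        (Measure.map (fun q : G × X => φ q.1 q.2) (lam.prod μ)) := by
      rw [hmap_prod]; exact hK_int.1
    have hHK : ∀ q : G × X, (inner ℝ (F q) (h q.2) : ℝ)
        = (inner ℝ (f₀ (φ q.1 q.2)) (h (φ q.1 q.2)) : ℝ) := by
      intro q
      rw [hequiv q.1 q.2]
      rw [← (ψ q.1).inner_map_map ((ψ q.1).symm (f₀ (φ q.1 q.2))) (h q.2)]
      rw [LinearIsometryEquiv.apply_symm_apply]
    have hHKfun : (fun q : G × X => (inner ℝ (F q) (h q.2) : ℝ))
        = fun q : G × X => (inner ℝ (f₀ (φ q.1 q.2)) (h (φ q.1 q.2)) : ℝ) := funext hHK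
    have hH_int : Integrable (fun q : G × X => (inner ℝ (F q) (h q.2) : ℝ)) (lam.prod μ) := by
      rw [hHKfun]
      have := (integrable_map_measure hK_asm' hφ_meas.aemeasurable).1
        (by rw [hmap_prod]; exact hK_int)
      exact this
    have e1 : ∀ᵐ x ∂μ, (inner ℝ (fb x) (h x) : ℝ) = ∫ g, (inner ℝ (F (g, x)) (h x) : ℝ) ∂lam := by
      filter_upwards [hF_int_ae] with x hx
      have hcc := ContinuousLinearMap.integral_comp_comm (innerSL ℝ (h x)) hx
      simp only [innerSL_apply_apply] at hcc
      calc (inner ℝ (fb x) (h x) : ℝ) = (inner ℝ (h x) (fb x) : ℝ) := real_inner_comm _ _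
        _ = ∫ g, (inner ℝ (h x) (F (g, x)) : ℝ) ∂lam := by rw [hfb_eq x, ← hcc]
        _ = ∫ g, (inner ℝ (F (g, x)) (h x) : ℝ) ∂lam :=
            integral_congr_ae (Filter.Eventually.of_forall fun g => real_inner_comm _ _)
    have step1 : ∫ x, (inner ℝ (fb x) (h x) : ℝ) ∂μ = ∫ x, (inner ℝ (f₀ x) (h x) : ℝ) ∂μ := by
      have fub := integral_prod_symm (fun q : G × X => (inner ℝ (F q) (h q.2) : ℝ)) hH_int
      rw [integral_congr_ae e1, ← fub, hHKfun]
      have mk := integral_map (φ := fun q : G × X => φ q.1 q.2) hφ_meas.aemeasurable hK_asm'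
      rw [hmap_prod] at mk
      exact mk.symm
    have hi1 : Integrable (fun x => (inner ℝ (f₀ x) (h x) : ℝ)) μ := hK_int
    have hi2 : Integrable (fun x => (inner ℝ (fb x) (h x) : ℝ)) μ :=
      helper_integrable_inner hfb_L2 hh
    have : ∫ x, ((inner ℝ (f₀ x) (h x) : ℝ) - (inner ℝ (fb x) (h x) : ℝ)) ∂μ = 0 := by
      rw [integral_sub hi1 hi2, step1, sub_self]
    calc ∫ x, (inner ℝ (f₀ x - fb x) (h x) : ℝ) ∂μ
        = ∫ x, ((inner ℝ (f₀ x) (h x) : ℝ) - (inner ℝ (fb x) (h x) : ℝ)) ∂μ := by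
          refine integral_congr_ae (Filter.Eventually.of_forall fun x => ?_)
          exact inner_sub_left _ _ _
      _ = 0 := this
  -- Pythagoras
  have hcross0 : ∫ x, (inner ℝ (f₀ x - fb x) (fb x - fstar x) : ℝ) ∂μ = 0 := by
    refine horth (fun x => fb x - fstar x) ?_ (by exact hfb_L2.sub hfstar_L2)
    intro g x
    show fb (φ g x) - fstar (φ g x) = ψ g (fb x - fstar x)
    rw [hfb_equiv g x, hfstar_equiv g x, map_sub]
  have int1 : Integrable (fun x => ‖f₀ x - fb x‖ ^ 2) μ := by
    exact helper_integrable_sq (hf₀.sub hfb_L2)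
  have int2 : Integrable (fun x => 2 * (inner ℝ (f₀ x - fb x) (fb x - fstar x) : ℝ)) μ := by
    exact (helper_integrable_inner (hf₀.sub hfb_L2) (hfb_L2.sub hfstar_L2)).const_mul 2
  have int3 : Integrable (fun x => ‖fb x - fstar x‖ ^ 2) μ := by
    exact helper_integrable_sq (hfb_L2.sub hfstar_L2)
  have hpyth : ∫ x, ‖f₀ x - fstar x‖ ^ 2 ∂μ
      = ∫ x, ‖fb x - fstar x‖ ^ 2 ∂μ + ∫ x, ‖f₀ x - fb x‖ ^ 2 ∂μ := by
    have hptw : ∀ x, ‖f₀ x - fstar x‖ ^ 2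
        = ‖f₀ x - fb x‖ ^ 2 + 2 * (inner ℝ (f₀ x - fb x) (fb x - fstar x) : ℝ)
          + ‖fb x - fstar x‖ ^ 2 := by
      intro x
      have hd : f₀ x - fstar x = (f₀ x - fb x) + (fb x - fstar x) := by abel
      rw [hd, norm_add_sq_real]
    have int12 : Integrable (fun x => ‖f₀ x - fb x‖ ^ 2
        + 2 * (inner ℝ (f₀ x - fb x) (fb x - fstar x) : ℝ)) μ := by exact int1.add int2
    simp_rw [hptw]
    rw [integral_add int12 int3, integral_add int1 int2, integral_const_mul,
      hcross0, mul_zero, add_zero]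
    ring
  -- risk decomposition
  have hξ_int : Integrable ξ P := hξ_L2.integrable one_le_two
  have hrisk : ∀ h : X → EuclideanSpace ℝ (Fin k), MemLp h 2 μ →
      ∫ ω, ‖h (Xv ω) - (fstar (Xv ω) + ξ ω)‖ ^ 2 ∂P
        = ∫ x, ‖h x - fstar x‖ ^ 2 ∂μ + ∫ ω, ‖ξ ω‖ ^ 2 ∂P := by
    intro h hh
    have hD_L2 : MemLp (fun x => h x - fstar x) 2 μ := by exact hh.sub hfstar_L2
    have ha_L2 : MemLp (fun ω => h (Xv ω) - fstar (Xv ω)) 2 P := by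
      exact hD_L2.comp_measurePreserving hXvP
    have hcross : ∫ ω, (inner ℝ (h (Xv ω) - fstar (Xv ω)) (ξ ω) : ℝ) ∂P = 0 := by
      obtain ⟨D₀, hD₀m, hDD₀⟩ : ∃ D₀ : X → EuclideanSpace ℝ (Fin k),
          Measurable D₀ ∧ (fun x => h x - fstar x) =ᵐ[μ] D₀ :=
        ⟨hD_L2.1.mk _, hD_L2.1.stronglyMeasurable_mk.measurable, hD_L2.1.ae_eq_mk⟩
      have haeD : (fun ω => h (Xv ω) - fstar (Xv ω)) =ᵐ[P] fun ω => D₀ (Xv ω) := haeXv hDD₀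
      have hD₀_L2P : MemLp (fun ω => D₀ (Xv ω)) 2 P := ha_L2.ae_eq haeD
      have e0 : ∫ ω, (inner ℝ (h (Xv ω) - fstar (Xv ω)) (ξ ω) : ℝ) ∂P
          = ∫ ω, (inner ℝ (D₀ (Xv ω)) (ξ ω) : ℝ) ∂P :=
        integral_congr_ae (haeD.mono fun ω hω => by simp only [hω])
      rw [e0]
      have hproj : ∀ i : Fin k, Measurable fun v : EuclideanSpace ℝ (Fin k) => v i :=
        fun i => (measurable_pi_apply i).comp (WithLp.measurable_ofLp 2 _)
      have hinner : ∀ ω, (inner ℝ (D₀ (Xv ω)) (ξ ω) : ℝ) = ∑ i, D₀ (Xv ω) i * ξ ω i := by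
        intro ω
        simp [PiLp.inner_apply, RCLike.inner_apply, conj_trivial, mul_comm]
      simp_rw [hinner]
      have hbnd : Integrable (fun ω => (‖D₀ (Xv ω)‖ ^ 2 + ‖ξ ω‖ ^ 2) / 2) P := by
        exact ((helper_integrable_sq hD₀_L2P).add (helper_integrable_sq hξ_L2)).div_const 2
      have hint_prod : ∀ i : Fin k, Integrable (fun ω => D₀ (Xv ω) i * ξ ω i) P := by
        intro i
        refine Integrable.mono' hbnd
          ((((hproj i).comp (hD₀m.comp hXv_meas)).mul
            ((hproj i).comp hξ_meas)).aestronglyMeasurable)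
          (Filter.Eventually.of_forall fun ω => ?_)
        have b1 : |D₀ (Xv ω) i| ≤ ‖D₀ (Xv ω)‖ := helper_abs_coord_le _ i
        have b2 : |ξ ω i| ≤ ‖ξ ω‖ := helper_abs_coord_le _ i
        have b3 : |D₀ (Xv ω) i| * |ξ ω i| ≤ ‖D₀ (Xv ω)‖ * ‖ξ ω‖ :=
          mul_le_mul b1 b2 (abs_nonneg _) (norm_nonneg _)
        have b4 : ‖D₀ (Xv ω)‖ * ‖ξ ω‖ ≤ (‖D₀ (Xv ω)‖ ^ 2 + ‖ξ ω‖ ^ 2) / 2 := by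
          nlinarith [sq_nonneg (‖D₀ (Xv ω)‖ - ‖ξ ω‖)]
        rw [Real.norm_eq_abs, abs_mul]
        exact b3.trans b4
      rw [integral_finset_sum _ (fun i _ => hint_prod i)]
      refine Finset.sum_eq_zero fun i _ => ?_
      have hind : ProbabilityTheory.IndepFun (fun ω => D₀ (Xv ω) i) (fun ω => ξ ω i) P := by
        exact hξ_indep.comp ((hproj i).comp hD₀m) (hproj i)
      have hmul := hind.integral_mul_eq_mul_integral
        (((hproj i).comp (hD₀m.comp hXv_meas)).aestronglyMeasurable)
        (((hproj i).comp hξ_meas).aestronglyMeasurable)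
      have hmean_i : ∫ ω, ξ ω i ∂P = 0 := by
        have h2 := ContinuousLinearMap.integral_comp_comm
          (EuclideanSpace.proj (𝕜 := ℝ) (i : Fin k)) hξ_int
        rw [hξ_mean] at h2
        simpa using h2
      calc ∫ ω, D₀ (Xv ω) i * ξ ω i ∂P
          = (∫ ω, D₀ (Xv ω) i ∂P) * ∫ ω, ξ ω i ∂P := by exact hmul
        _ = 0 := by rw [hmean_i, mul_zero]
    have hexp : ∀ ω, ‖h (Xv ω) - (fstar (Xv ω) + ξ ω)‖ ^ 2
        = ‖h (Xv ω) - fstar (Xv ω)‖ ^ 2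
          - 2 * (inner ℝ (h (Xv ω) - fstar (Xv ω)) (ξ ω) : ℝ) + ‖ξ ω‖ ^ 2 := by
      intro ω
      rw [sub_add_eq_sub_sub, norm_sub_sq_real]
    have hA : Integrable (fun ω => ‖h (Xv ω) - fstar (Xv ω)‖ ^ 2) P := by
      exact helper_integrable_sq ha_L2
    have hB : Integrable (fun ω => 2 * (inner ℝ (h (Xv ω) - fstar (Xv ω)) (ξ ω) : ℝ)) P := by
      exact (helper_integrable_inner ha_L2 hξ_L2).const_mul 2
    have hC : Integrable (fun ω => ‖ξ ω‖ ^ 2) P := by exact helper_integrable_sq hξ_L2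
    have hmapA : ∫ ω, ‖h (Xv ω) - fstar (Xv ω)‖ ^ 2 ∂P = ∫ x, ‖h x - fstar x‖ ^ 2 ∂μ := by
      have hasm : AEStronglyMeasurable (fun x => ‖h x - fstar x‖ ^ 2) (Measure.map Xv P) := by
        rw [hXv_law]
        exact (hD_L2.1.norm.aemeasurable.pow_const 2).aestronglyMeasurable
      rw [← hXv_law, integral_map hXv_meas.aemeasurable hasm]
    have hAB : Integrable (fun ω => ‖h (Xv ω) - fstar (Xv ω)‖ ^ 2
        - 2 * (inner ℝ (h (Xv ω) - fstar (Xv ω)) (ξ ω) : ℝ)) P := by exact hA.sub hB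
    simp_rw [hexp]
    rw [integral_add hAB hC, integral_sub hA hB, integral_const_mul, hcross,
      mul_zero, sub_zero, hmapA]
  -- assembly
  have hRf : ∫ ω, ‖f (Xv ω) - (fstar (Xv ω) + ξ ω)‖ ^ 2 ∂P
      = ∫ x, ‖f₀ x - fstar x‖ ^ 2 ∂μ + ∫ ω, ‖ξ ω‖ ^ 2 ∂P := by
    rw [hrisk f hf]
    congr 1
    exact integral_congr_ae (hff₀.mono fun x hx => by simp only [hx])
  have hRb : ∫ ω, ‖avgQ lam φ ψ f (Xv ω) - (fstar (Xv ω) + ξ ω)‖ ^ 2 ∂P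
      = ∫ x, ‖fb x - fstar x‖ ^ 2 ∂μ + ∫ ω, ‖ξ ω‖ ^ 2 ∂P := by
    have h1 : ∫ ω, ‖avgQ lam φ ψ f (Xv ω) - (fstar (Xv ω) + ξ ω)‖ ^ 2 ∂P
        = ∫ ω, ‖fb (Xv ω) - (fstar (Xv ω) + ξ ω)‖ ^ 2 ∂P :=
      integral_congr_ae ((haeXv havg_ae).mono fun ω hω => by simp only [hω])
    rw [h1, hrisk fb hfb_L2]
  have hT : ∫ x, ‖f x - avgQ lam φ ψ f x‖ ^ 2 ∂μ = ∫ x, ‖f₀ x - fb x‖ ^ 2 ∂μ := by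
    refine integral_congr_ae ?_
    filter_upwards [hff₀, havg_ae] with x h1 h2
    rw [h1, h2]
  refine ⟨?_, ?_, ?_⟩
  · rw [hT]
    linarith [hf'_risk, hRf, hRb, hpyth]
  · intro heq
    rw [hT]
    linarith [hRf, hRb, hpyth, heq]
  · intro hne
    have hnn : 0 ≤ ∫ x, ‖f₀ x - fb x‖ ^ 2 ∂μ := integral_nonneg fun x => sq_nonneg _
    have hTpos : 0 < ∫ x, ‖f₀ x - fb x‖ ^ 2 ∂μ := by
      rcases hnn.lt_or_eq with hlt | heq
      · exact hlt
      · exfalso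
        apply hne
        have hz : (fun x => ‖f₀ x - fb x‖ ^ 2) =ᵐ[μ] 0 :=
          (integral_eq_zero_iff_of_nonneg (fun x => sq_nonneg _) int1).1 heq.symm
        have hfb0 : f₀ =ᵐ[μ] fb := by
          filter_upwards [hz] with x hx
          have hx0 : ‖f₀ x - fb x‖ ^ 2 = 0 := hx
          have hv : f₀ x - fb x = 0 :=
            norm_eq_zero.1 ((pow_eq_zero_iff (by norm_num : (2 : ℕ) ≠ 0)).1 hx0)
          exact sub_eq_zero.1 hv
        exact hff₀.trans (hfb0.trans havg_ae.symm)
    linarith [hRf, hRb, hpyth, hTpos]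
end

section
/- Let μ be a G-invariant probability measure on ℝ^d with finite, positive definite second-moment matrix Σ = E[XXᵀ] for X ~ μ. Let ξ be a random vector in ℝ^k independent of X with E[ξ] = 0 and finite variance, and set Y = ΘᵀX + ξ, where h_Θ(x) = Θᵀx is G-equivariant. Then for every W ∈ ℝ^{d×k}, the generalisation gap satisfies E[‖Y − f_W(X)‖₂²] − E[‖Y − f_{W̄}(X)‖₂²] = ‖Σ^{1/2} W⊥‖_F², where W̄ = Ψ(W), W⊥ = W − Ψ(W), and Ψ(W) = ∫_G φ(g) W ψ(g⁻¹) dλ(g). -/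
open MeasureTheory ProbabilityTheory Matrix
open scoped ENNReal

section Aux
variable {d k : ℕ}

lemma sq_vecMul' (x : Fin d → ℝ) (M : Matrix (Fin d) (Fin k) ℝ) (j : Fin k) :
    ((x ᵥ* M) j)^2 = ∑ i, ∑ i', M i j * M i' j * (x i * x i') := by
  simp only [vecMul, dotProduct]
  rw [sq, Finset.sum_mul_sum]
  exact Finset.sum_congr rfl fun i _ => Finset.sum_congr rfl fun i' _ => by ring

lemma aux_int' (μ : Measure (Fin d → ℝ))
    (hmom : ∀ i j, Integrable (fun x => x i * x j) μ)
    (M : Matrix (Fin d) (Fin k) ℝ) :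
    Integrable (fun x => ∑ j, ((x ᵥ* M) j)^2) μ := by
  simp only [sq_vecMul']
  refine integrable_finset_sum _ fun j _ => integrable_finset_sum _ fun i _ =>
    integrable_finset_sum _ fun i' _ => (hmom i i').const_mul _

lemma aux_val' (μ : Measure (Fin d → ℝ))
    (hmom : ∀ i j, Integrable (fun x => x i * x j) μ)
    (Sig : Matrix (Fin d) (Fin d) ℝ) (hSig : ∀ i j, Sig i j = ∫ x, x i * x j ∂μ)
    (M : Matrix (Fin d) (Fin k) ℝ) :
    ∫ x, ∑ j, ((x ᵥ* M) j)^2 ∂μ = (Mᵀ * Sig * M).trace := by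
  simp only [sq_vecMul']
  rw [integral_finset_sum _ (fun j _ => integrable_finset_sum _ fun i _ =>
    integrable_finset_sum _ fun i' _ => (hmom i i').const_mul _)]
  have : ∀ j : Fin k, ∫ x, ∑ i, ∑ i', M i j * M i' j * (x i * x i') ∂μ
      = ∑ i, ∑ i', M i j * M i' j * Sig i i' := by
    intro j
    rw [integral_finset_sum _ (fun i _ => integrable_finset_sum _ fun i' _ =>
      (hmom i i').const_mul _)]
    refine Finset.sum_congr rfl fun i _ => ?_
    rw [integral_finset_sum _ (fun i' _ => (hmom i i').const_mul _)]
    exact Finset.sum_congr rfl fun i' _ => by rw [integral_const_mul, hSig]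
  simp only [this]
  rw [Matrix.trace]
  refine Finset.sum_congr rfl fun j _ => ?_
  simp only [Matrix.diag_apply, Matrix.mul_apply, Matrix.transpose_apply, Finset.sum_mul]
  rw [Finset.sum_comm]
  exact Finset.sum_congr rfl fun i _ => Finset.sum_congr rfl fun i' _ => by ring

lemma abs_le_sq_add_one (t : ℝ) : |t| ≤ t ^ 2 + 1 := by
  nlinarith [sq_nonneg (|t| - 1), sq_abs t, abs_nonneg t]

lemma vecMul_meas (M : Matrix (Fin d) (Fin k) ℝ) (j : Fin k) :
    Measurable fun x : Fin d → ℝ => (x ᵥ* M) j := by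
  simp only [vecMul, dotProduct]
  exact Finset.measurable_sum _ fun i _ => (measurable_pi_apply i).mul_const _

lemma int_coord (μ : Measure (Fin d → ℝ)) [IsFiniteMeasure μ]
    (hmom : ∀ i j, Integrable (fun x => x i * x j) μ) (i : Fin d) :
    Integrable (fun x : Fin d → ℝ => x i) μ := by
  refine Integrable.mono' ((hmom i i).add (integrable_const 1))
    (measurable_pi_apply i).aestronglyMeasurable (ae_of_all _ fun x => ?_)
  simpa [Real.norm_eq_abs, sq] using abs_le_sq_add_one (x i)

lemma int_vecMul (μ : Measure (Fin d → ℝ)) [IsFiniteMeasure μ]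
    (hmom : ∀ i j, Integrable (fun x => x i * x j) μ)
    (M : Matrix (Fin d) (Fin k) ℝ) (j : Fin k) :
    Integrable (fun x => (x ᵥ* M) j) μ := by
  simp only [vecMul, dotProduct]
  exact integrable_finset_sum _ fun i _ => (int_coord μ hmom i).mul_const _

lemma orth_entry_bd {n : ℕ} {A : Matrix (Fin n) (Fin n) ℝ} (h : Aᵀ * A = 1)
    (i a : Fin n) : |A i a| ≤ 1 := by
  have h1 := congrFun (congrFun h a) a
  simp only [Matrix.mul_apply, Matrix.transpose_apply, Matrix.one_apply_eq] at h1
  have h2 : A i a * A i a ≤ 1 := by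
    rw [← h1]
    exact Finset.single_le_sum (f := fun i => A i a * A i a)
      (fun i _ => mul_self_nonneg _) (Finset.mem_univ i)
  nlinarith [abs_nonneg (A i a), sq_abs (A i a)]

end Aux

/-- The square root of a positive semidefinite matrix, as `Matrix.PosSemidef.sqrt` was
defined in the older Mathlib. -/
noncomputable def Matrix.PosSemidef.sqrtOld {n : Type*} [Fintype n] [DecidableEq n]
    {A : Matrix n n ℝ} (hA : A.PosSemidef) : Matrix n n ℝ :=
  hA.1.eigenvectorUnitary.1 * diagonal ((↑) ∘ (√·) ∘ hA.1.eigenvalues) *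
    (star hA.1.eigenvectorUnitary : Matrix n n ℝ)

/-- The generalisation gap between a linear predictor `f_W` and its equivariant
average `f_{Ψ(W)}`, on a task with an equivariant linear target, `G`-invariant
covariate law `μ` and centred independent noise, equals `‖Σ^{1/2} W⊥‖_F²`. -/
theorem stmt_11 {G : Type*} [Group G] [TopologicalSpace G] [IsTopologicalGroup G]
    [CompactSpace G] [SecondCountableTopology G] [T2Space G]
    [MeasurableSpace G] [BorelSpace G]
    (lam : Measure G) [IsProbabilityMeasure lam]
    (hlam_left : ∀ g : G, Measure.map (fun h => g * h) lam = lam)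
    (hlam_inv : Measure.map (fun g : G => g⁻¹) lam = lam)
    {d k : ℕ}
    (φ : G → Matrix (Fin d) (Fin d) ℝ)
    (hφ_meas : ∀ i j, Measurable fun g => φ g i j)
    (hφ_one : φ 1 = 1)
    (hφ_mul : ∀ g h, φ (g * h) = φ g * φ h)
    (hφ_orth : ∀ g, (φ g)ᵀ * φ g = 1)
    (ψ : G → Matrix (Fin k) (Fin k) ℝ)
    (hψ_meas : ∀ i j, Measurable fun g => ψ g i j)
    (hψ_one : ψ 1 = 1)
    (hψ_mul : ∀ g h, ψ (g * h) = ψ g * ψ h)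
    (hψ_orth : ∀ g, (ψ g)ᵀ * ψ g = 1)
    (μ : Measure (Fin d → ℝ)) [IsProbabilityMeasure μ]
    (hμ_inv : ∀ g : G, Measure.map ((φ g).mulVec) μ = μ)
    (hmom : ∀ i j, Integrable (fun x => x i * x j) μ)
    (Sig : Matrix (Fin d) (Fin d) ℝ)
    (hSig : ∀ i j, Sig i j = ∫ x, x i * x j ∂μ)
    (hSig_pd : Sig.PosDef)
    (Θ : Matrix (Fin d) (Fin k) ℝ)
    (hΘ_equiv : ∀ g x, ((φ g).mulVec x) ᵥ* Θ = (ψ g).mulVec (x ᵥ* Θ))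
    {Ω : Type*} [MeasurableSpace Ω] (P : Measure Ω) [IsProbabilityMeasure P]
    (X : Ω → Fin d → ℝ) (ξ : Ω → Fin k → ℝ)
    (hX_meas : Measurable X) (hξ_meas : Measurable ξ)
    (hX_law : Measure.map X P = μ)
    (h_indep : IndepFun X ξ P)
    (hξ_mean : ∀ j, ∫ ω, ξ ω j ∂P = 0)
    (hξ_L2 : ∀ j, Integrable (fun ω => (ξ ω j) ^ 2) P)
    (W : Matrix (Fin d) (Fin k) ℝ)
    (Wbar : Matrix (Fin d) (Fin k) ℝ)
    (hWbar : ∀ i j, Wbar i j = ∫ g, (φ g * W * ψ g⁻¹) i j ∂lam) :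
    (∫ ω, ∑ j, (((X ω ᵥ* Θ) j + ξ ω j) - (X ω ᵥ* W) j) ^ 2 ∂P)
        - (∫ ω, ∑ j, (((X ω ᵥ* Θ) j + ξ ω j) - (X ω ᵥ* Wbar) j) ^ 2 ∂P)
      = (((W - Wbar)ᵀ * hSig_pd.posSemidef.sqrtOld)
          * (hSig_pd.posSemidef.sqrtOld * (W - Wbar))).trace := by
  ----------------------------------------------------------------
  -- Part I : probabilistic reduction
  ----------------------------------------------------------------
  have hX_ae : AEMeasurable X P := hX_meas.aemeasurable
  have comp_int : ∀ f : (Fin d → ℝ) → ℝ, Measurable f → Integrable f μ →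
      Integrable (fun ω => f (X ω)) P := by
    intro f hf hif
    rw [← hX_law] at hif
    exact (integrable_map_measure hf.aestronglyMeasurable hX_ae).mp hif
  have comp_val : ∀ f : (Fin d → ℝ) → ℝ, Measurable f →
      ∫ ω, f (X ω) ∂P = ∫ x, f x ∂μ := by
    intro f hf
    rw [← hX_law, integral_map hX_ae hf.aestronglyMeasurable]
  have cross0 : ∀ (M : Matrix (Fin d) (Fin k) ℝ) (j : Fin k),
      Integrable (fun ω => (X ω ᵥ* M) j * ξ ω j) P ∧
        ∫ ω, (X ω ᵥ* M) j * ξ ω j ∂P = 0 := by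
    intro M j
    have hfm : Measurable fun x : Fin d → ℝ => (x ᵥ* M) j := vecMul_meas M j
    have hind : IndepFun (fun ω => (X ω ᵥ* M) j) (fun ω => ξ ω j) P :=
      h_indep.comp hfm (measurable_pi_apply j)
    have hint1 : Integrable (fun ω => (X ω ᵥ* M) j) P :=
      comp_int _ hfm (int_vecMul μ hmom M j)
    have hint2 : Integrable (fun ω => ξ ω j) P := by
      refine Integrable.mono' ((hξ_L2 j).add (integrable_const 1))
        ((measurable_pi_apply j).comp hξ_meas).aestronglyMeasurable
        (ae_of_all _ fun ω => ?_)
      simpa [Real.norm_eq_abs] using abs_le_sq_add_one (ξ ω j)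
    refine ⟨hind.integrable_mul hint1 hint2, ?_⟩
    rw [hind.integral_fun_mul_eq_mul_integral hint1.aestronglyMeasurable hint2.aestronglyMeasurable,
      hξ_mean j, mul_zero]
  have sqsum_meas : ∀ M : Matrix (Fin d) (Fin k) ℝ,
      Measurable fun x : Fin d → ℝ => ∑ j, ((x ᵥ* M) j)^2 :=
    fun M => Finset.measurable_sum _ fun j _ => (vecMul_meas M j).pow_const 2
  have main : ∀ M : Matrix (Fin d) (Fin k) ℝ,
      ∫ ω, ∑ j, (((X ω ᵥ* Θ) j + ξ ω j) - (X ω ᵥ* M) j)^2 ∂P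
        = ((Θ - M)ᵀ * Sig * (Θ - M)).trace + ∫ ω, ∑ j, (ξ ω j)^2 ∂P := by
    intro M
    have hpt : ∀ ω, ∑ j, (((X ω ᵥ* Θ) j + ξ ω j) - (X ω ᵥ* M) j)^2
        = (∑ j, ((X ω ᵥ* (Θ - M)) j)^2)
          + ((∑ j, 2 * ((X ω ᵥ* (Θ - M)) j * ξ ω j)) + ∑ j, (ξ ω j)^2) := by
      intro ω
      rw [← Finset.sum_add_distrib, ← Finset.sum_add_distrib]
      refine Finset.sum_congr rfl fun j _ => ?_
      have hsub : (X ω ᵥ* (Θ - M)) j = (X ω ᵥ* Θ) j - (X ω ᵥ* M) j := by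
        rw [Matrix.vecMul_sub]; rfl
      rw [hsub]; ring
    simp only [hpt]
    have i1 : Integrable (fun ω => ∑ j, ((X ω ᵥ* (Θ - M)) j)^2) P :=
      comp_int _ (sqsum_meas _) (aux_int' μ hmom _)
    have i2 : Integrable (fun ω => ∑ j, 2 * ((X ω ᵥ* (Θ - M)) j * ξ ω j)) P :=
      integrable_finset_sum _ fun j _ => ((cross0 _ j).1.const_mul 2)
    have i3 : Integrable (fun ω => ∑ j, (ξ ω j)^2) P :=
      integrable_finset_sum _ fun j _ => hξ_L2 j
    have split : ∀ (A B C : Ω → ℝ), Integrable A P → Integrable B P → Integrable C P →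
        ∫ ω, (A ω + (B ω + C ω)) ∂P
          = (∫ ω, A ω ∂P) + ((∫ ω, B ω ∂P) + (∫ ω, C ω ∂P)) := by
      intro A B C hA hB hC
      rw [integral_add hA (show Integrable (fun ω => B ω + C ω) P from hB.add hC),
        integral_add hB hC]
    rw [split _ _ _ i1 i2 i3]
    rw [comp_val _ (sqsum_meas _), aux_val' μ hmom Sig hSig]
    have hz : ∫ ω, ∑ j, 2 * ((X ω ᵥ* (Θ - M)) j * ξ ω j) ∂P = 0 := by
      rw [integral_finset_sum _ (fun j _ => ((cross0 _ j).1.const_mul 2))]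
      refine Finset.sum_eq_zero fun j _ => ?_
      rw [integral_const_mul, (cross0 _ j).2, mul_zero]
    rw [hz, zero_add]
  rw [main W, main Wbar]
  have key : ((Θ - W)ᵀ * Sig * (Θ - W)).trace - ((Θ - Wbar)ᵀ * Sig * (Θ - Wbar)).trace
      = ((W - Wbar)ᵀ * Sig * (W - Wbar)).trace := by
    -- basic group/orthogonality facts
    have hφ_orth' : ∀ g : G, φ g * (φ g)ᵀ = 1 := fun g => mul_eq_one_comm.mp (hφ_orth g)
    have hψ_orth' : ∀ g : G, ψ g * (ψ g)ᵀ = 1 := fun g => mul_eq_one_comm.mp (hψ_orth g)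
    have hφ_invmul : ∀ g : G, φ g⁻¹ * φ g = 1 := fun g => by
      rw [← hφ_mul, inv_mul_cancel, hφ_one]
    have hψ_invmul : ∀ g : G, ψ g⁻¹ * ψ g = 1 := fun g => by
      rw [← hψ_mul, inv_mul_cancel, hψ_one]
    have hφ_inv : ∀ g : G, φ g⁻¹ = (φ g)ᵀ := by
      intro g
      calc φ g⁻¹ = φ g⁻¹ * (φ g * (φ g)ᵀ) := by rw [hφ_orth', Matrix.mul_one]
        _ = (φ g⁻¹ * φ g) * (φ g)ᵀ := by rw [Matrix.mul_assoc]
        _ = (φ g)ᵀ := by rw [hφ_invmul, Matrix.one_mul]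
    have hψ_inv : ∀ g : G, ψ g⁻¹ = (ψ g)ᵀ := by
      intro g
      calc ψ g⁻¹ = ψ g⁻¹ * (ψ g * (ψ g)ᵀ) := by rw [hψ_orth', Matrix.mul_one]
        _ = (ψ g⁻¹ * ψ g) * (ψ g)ᵀ := by rw [Matrix.mul_assoc]
        _ = (ψ g)ᵀ := by rw [hψ_invmul, Matrix.one_mul]
    have hφ_bd : ∀ (g : G) (i a : Fin d), |φ g i a| ≤ 1 := fun g => orth_entry_bd (hφ_orth g)
    have hψ_bd : ∀ (g : G) (i a : Fin k), |ψ g i a| ≤ 1 := fun g => orth_entry_bd (hψ_orth g)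
    -- entries of the averaged family are measurable and bounded
    have hEnt_meas : ∀ (i : Fin d) (j : Fin k),
        Measurable fun g : G => (φ g * W * ψ g⁻¹) i j := by
      intro i j
      simp only [Matrix.mul_apply]
      exact Finset.measurable_sum _ fun b _ =>
        ((Finset.measurable_sum _ fun a _ => (hφ_meas i a).mul_const _).mul
          ((hψ_meas b j).comp measurable_inv))
    have hEnt_bd : ∀ (g : G) (i : Fin d) (j : Fin k),
        |(φ g * W * ψ g⁻¹) i j| ≤ ∑ b, ∑ a, |W a b| := by
      intro g i j
      have hb : ∀ b : Fin k, |(∑ a, φ g i a * W a b) * ψ g⁻¹ b j| ≤ ∑ a, |W a b| := by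
        intro b
        rw [abs_mul]
        have h1 : |∑ a, φ g i a * W a b| ≤ ∑ a, |W a b| := by
          refine (Finset.abs_sum_le_sum_abs _ _).trans (Finset.sum_le_sum fun a _ => ?_)
          rw [abs_mul]
          calc |φ g i a| * |W a b| ≤ 1 * |W a b| :=
              mul_le_mul_of_nonneg_right (hφ_bd g i a) (abs_nonneg _)
            _ = |W a b| := one_mul _
        calc |∑ a, φ g i a * W a b| * |ψ g⁻¹ b j| ≤ (∑ a, |W a b|) * 1 :=
            mul_le_mul h1 (hψ_bd g⁻¹ b j) (abs_nonneg _)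
              (Finset.sum_nonneg fun a _ => abs_nonneg _)
          _ = ∑ a, |W a b| := mul_one _
      calc |(φ g * W * ψ g⁻¹) i j|
          = |∑ b, (∑ a, φ g i a * W a b) * ψ g⁻¹ b j| := by simp only [Matrix.mul_apply]
        _ ≤ ∑ b, |(∑ a, φ g i a * W a b) * ψ g⁻¹ b j| := Finset.abs_sum_le_sum_abs _ _
        _ ≤ ∑ b, ∑ a, |W a b| := Finset.sum_le_sum fun b _ => hb b
    have hEnt_int : ∀ (i : Fin d) (j : Fin k),
        Integrable (fun g : G => (φ g * W * ψ g⁻¹) i j) lam := by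
      intro i j
      refine Integrable.mono' (integrable_const (∑ b, ∑ a, |W a b|))
        (hEnt_meas i j).aestronglyMeasurable (ae_of_all _ fun g => ?_)
      simpa [Real.norm_eq_abs] using hEnt_bd g i j
    -- Σ commutes with the representation
    have hmv_meas : ∀ g : G, Measurable ((φ g).mulVec) := by
      intro g
      have : (φ g).mulVec = fun x => fun i => ∑ a, φ g i a * x a := by
        ext x i; simp [Matrix.mulVec, dotProduct]
      rw [this]
      exact measurable_pi_lambda _ fun i => Finset.measurable_sum _ fun a _ =>
        (measurable_pi_apply a).const_mul _
    have hSig_conj : ∀ g : G, φ g * Sig * (φ g)ᵀ = Sig := by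
      intro g
      ext i j
      have h1 : Sig i j = ∫ x, ((φ g).mulVec x) i * ((φ g).mulVec x) j ∂μ := by
        rw [hSig i j]
        conv_lhs => rw [← hμ_inv g]
        rw [integral_map (hmv_meas g).aemeasurable
          (show Measurable (fun x : Fin d → ℝ => x i * x j) from
            (measurable_pi_apply i).mul (measurable_pi_apply j)).aestronglyMeasurable]
      have h2 : ∀ x : Fin d → ℝ, ((φ g).mulVec x) i * ((φ g).mulVec x) j
          = ∑ a, ∑ b, φ g i a * φ g j b * (x a * x b) := by
        intro x
        simp only [Matrix.mulVec, dotProduct]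
        rw [Finset.sum_mul_sum]
        exact Finset.sum_congr rfl fun a _ => Finset.sum_congr rfl fun b _ => by ring
      have h3 : Sig i j = ∑ a, ∑ b, φ g i a * φ g j b * Sig a b := by
        rw [h1]
        simp only [h2]
        rw [integral_finset_sum _ (fun a _ => integrable_finset_sum _ fun b _ =>
          (hmom a b).const_mul _)]
        refine Finset.sum_congr rfl fun a _ => ?_
        rw [integral_finset_sum _ (fun b _ => (hmom a b).const_mul _)]
        exact Finset.sum_congr rfl fun b _ => by rw [integral_const_mul, hSig]
      show (φ g * Sig * (φ g)ᵀ) i j = Sig i j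
      rw [h3]
      simp only [Matrix.mul_apply, Matrix.transpose_apply, Finset.sum_mul]
      rw [Finset.sum_comm]
      exact Finset.sum_congr rfl fun a _ => Finset.sum_congr rfl fun b _ => by ring
    have hSig_comm : ∀ g : G, Sig * φ g = φ g * Sig := by
      intro g
      conv_lhs => rw [← hSig_conj g]
      rw [Matrix.mul_assoc (φ g * Sig), hφ_orth, Matrix.mul_one]
    -- Θ intertwines
    have hΘ_key : ∀ g : G, (φ g)ᵀ * Θ = Θ * (ψ g)ᵀ := by
      intro g
      ext i j
      have h := congrFun (hΘ_equiv g (Pi.single i 1)) j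
      rw [Matrix.mulVec_single_one, Matrix.single_one_vecMul] at h
      simpa [Matrix.mul_apply, Matrix.vecMul, Matrix.mulVec, dotProduct,
        Matrix.transpose_apply, mul_comm] using h
    have hΘ_comm : ∀ g : G, φ g * Θ = Θ * ψ g := by
      intro g
      have h := hΘ_key g⁻¹
      rw [hφ_inv, hψ_inv, Matrix.transpose_transpose, Matrix.transpose_transpose] at h
      exact h
    -- Wbar intertwines
    have hWbar_conj : ∀ g : G, φ g * Wbar * ψ g⁻¹ = Wbar := by
      intro g
      ext i j
      have expand : (φ g * Wbar * ψ g⁻¹) i j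
          = ∑ b, ∑ a, (φ g i a * ψ g⁻¹ b j) * Wbar a b := by
        simp only [Matrix.mul_apply, Finset.sum_mul]
        exact Finset.sum_congr rfl fun b _ => Finset.sum_congr rfl fun a _ => by ring
      calc (φ g * Wbar * ψ g⁻¹) i j
          = ∑ b, ∑ a, (φ g i a * ψ g⁻¹ b j) * Wbar a b := expand
        _ = ∑ b, ∑ a, ∫ g', (φ g i a * ψ g⁻¹ b j) * (φ g' * W * ψ g'⁻¹) a b ∂lam := by
            refine Finset.sum_congr rfl fun b _ => Finset.sum_congr rfl fun a _ => ?_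
            rw [integral_const_mul, hWbar]
        _ = ∫ g', ∑ b, ∑ a, (φ g i a * ψ g⁻¹ b j) * (φ g' * W * ψ g'⁻¹) a b ∂lam := by
            rw [integral_finset_sum _ (fun b _ => integrable_finset_sum _ fun a _ =>
              (hEnt_int a b).const_mul _)]
            exact Finset.sum_congr rfl fun b _ =>
              (integral_finset_sum _ (fun a _ => (hEnt_int a b).const_mul _)).symm
        _ = ∫ g', (φ (g * g') * W * ψ (g * g')⁻¹) i j ∂lam := by
            refine integral_congr_ae (ae_of_all _ fun g' => ?_)
            beta_reduce
            have hm : φ (g * g') * W * ψ (g * g')⁻¹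
                = φ g * (φ g' * W * ψ g'⁻¹) * ψ g⁻¹ := by
              rw [hφ_mul, _root_.mul_inv_rev, hψ_mul]
              simp only [Matrix.mul_assoc]
            rw [hm]
            set K := φ g' * W * ψ g'⁻¹ with hK
            simp only [Matrix.mul_apply, Finset.sum_mul]
            exact Finset.sum_congr rfl fun b _ => Finset.sum_congr rfl fun a _ => by ring
        _ = ∫ g', (φ g' * W * ψ g'⁻¹) i j ∂lam := by
            conv_rhs => rw [← hlam_left g]
            rw [integral_map (measurable_const_mul g).aemeasurable
              (hEnt_meas i j).aestronglyMeasurable]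
        _ = Wbar i j := (hWbar i j).symm
    have hWbar_comm : ∀ g : G, φ g * Wbar = Wbar * ψ g := by
      intro g
      calc φ g * Wbar = φ g * Wbar * (ψ g⁻¹ * ψ g) := by
            rw [hψ_invmul, Matrix.mul_one]
        _ = (φ g * Wbar * ψ g⁻¹) * ψ g := by rw [← Matrix.mul_assoc]
        _ = Wbar * ψ g := by rw [hWbar_conj g]
    -- equivariance of B := Θ - Wbar, transposed
    have hB_comm : ∀ g : G, φ g * (Θ - Wbar) = (Θ - Wbar) * ψ g := by
      intro g
      rw [Matrix.mul_sub, Matrix.sub_mul, hΘ_comm g, hWbar_comm g]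
    have hBt : ∀ g : G, (Θ - Wbar)ᵀ * φ g = ψ g * (Θ - Wbar)ᵀ := by
      intro g
      have h := congrArg Matrix.transpose (hB_comm g⁻¹)
      rw [Matrix.transpose_mul, Matrix.transpose_mul, hφ_inv, hψ_inv,
        Matrix.transpose_transpose, Matrix.transpose_transpose] at h
      exact h
    -- pointwise trace identity
    have hNW : ∀ g : G, ((Θ - Wbar)ᵀ * Sig * (φ g * W * ψ g⁻¹)).trace
        = ((Θ - Wbar)ᵀ * Sig * W).trace := by
      intro g
      have h1 : (Θ - Wbar)ᵀ * Sig * (φ g * W * ψ g⁻¹)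
          = ψ g * ((Θ - Wbar)ᵀ * Sig * W) * ψ g⁻¹ := by
        calc (Θ - Wbar)ᵀ * Sig * (φ g * W * ψ g⁻¹)
            = (Θ - Wbar)ᵀ * (Sig * φ g) * (W * ψ g⁻¹) := by simp only [Matrix.mul_assoc]
          _ = (Θ - Wbar)ᵀ * (φ g * Sig) * (W * ψ g⁻¹) := by rw [hSig_comm g]
          _ = ((Θ - Wbar)ᵀ * φ g) * (Sig * (W * ψ g⁻¹)) := by simp only [Matrix.mul_assoc]
          _ = (ψ g * (Θ - Wbar)ᵀ) * (Sig * (W * ψ g⁻¹)) := by rw [hBt g]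
          _ = ψ g * ((Θ - Wbar)ᵀ * Sig * W) * ψ g⁻¹ := by simp only [Matrix.mul_assoc]
      rw [h1, Matrix.trace_mul_cycle, hψ_invmul, Matrix.one_mul]
    -- the cross term vanishes
    have cross : ((Θ - Wbar)ᵀ * Sig * (W - Wbar)).trace = 0 := by
      have hWbar_tr : ((Θ - Wbar)ᵀ * Sig * Wbar).trace = ((Θ - Wbar)ᵀ * Sig * W).trace := by
        set N := (Θ - Wbar)ᵀ * Sig with hN
        calc (N * Wbar).trace = ∑ j, ∑ i, N j i * Wbar i j := by
              simp [Matrix.trace, Matrix.diag, Matrix.mul_apply]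
          _ = ∑ j, ∑ i, ∫ g, N j i * (φ g * W * ψ g⁻¹) i j ∂lam := by
              refine Finset.sum_congr rfl fun j _ => Finset.sum_congr rfl fun i _ => ?_
              rw [integral_const_mul, hWbar]
          _ = ∫ g, ∑ j, ∑ i, N j i * (φ g * W * ψ g⁻¹) i j ∂lam := by
              rw [integral_finset_sum _ (fun j _ => integrable_finset_sum _ fun i _ =>
                (hEnt_int i j).const_mul (N j i))]
              exact Finset.sum_congr rfl fun j _ =>
                (integral_finset_sum _ (fun i _ => (hEnt_int i j).const_mul (N j i))).symm
          _ = ∫ g, (N * (φ g * W * ψ g⁻¹)).trace ∂lam := by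
              refine integral_congr_ae (ae_of_all _ fun g => ?_)
              simp [Matrix.trace, Matrix.diag, Matrix.mul_apply]
          _ = ∫ g, (N * W).trace ∂lam := by
              refine integral_congr_ae (ae_of_all _ fun g => ?_)
              exact hNW g
          _ = (N * W).trace := by
              rw [integral_const]
              simp
      rw [Matrix.mul_sub, Matrix.trace_sub, hWbar_tr, sub_self]
    -- Σ is symmetric
    have hSig_symm : Sigᵀ = Sig := by
      ext i j
      rw [Matrix.transpose_apply, hSig, hSig]
      exact integral_congr_ae (ae_of_all _ fun x => mul_comm _ _)
    have cross' : ((W - Wbar)ᵀ * Sig * (Θ - Wbar)).trace = 0 := by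
      have h2 : (W - Wbar)ᵀ * Sig * (Θ - Wbar)
          = ((Θ - Wbar)ᵀ * Sig * (W - Wbar))ᵀ := by
        rw [Matrix.transpose_mul, Matrix.transpose_mul, Matrix.transpose_transpose,
          hSig_symm, Matrix.mul_assoc]
      rw [h2, Matrix.trace_transpose, cross]
    -- final expansion
    have hA : Θ - W = (Θ - Wbar) - (W - Wbar) := (sub_sub_sub_cancel_right Θ W Wbar).symm
    rw [hA]
    have c1 := cross
    have c2 := cross'
    rw [Matrix.transpose_sub, Matrix.sub_mul, Matrix.mul_sub, Matrix.sub_mul,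
      Matrix.sub_mul, Matrix.trace_sub, Matrix.trace_sub, Matrix.trace_sub]
    linarith [c1, c2]
  have hs : hSig_pd.posSemidef.sqrtOld * hSig_pd.posSemidef.sqrtOld = Sig := by
    have hP := hSig_pd.posSemidef
    have hUU : (star hP.1.eigenvectorUnitary : Matrix (Fin d) (Fin d) ℝ) * hP.1.eigenvectorUnitary.1 = 1 :=
      Unitary.coe_star_mul_self _
    have hD : diagonal ((↑) ∘ (√·) ∘ hP.1.eigenvalues) * diagonal ((↑) ∘ (√·) ∘ hP.1.eigenvalues)
        = diagonal (RCLike.ofReal ∘ hP.1.eigenvalues : Fin d → ℝ) := by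
      rw [diagonal_mul_diagonal]
      congr 1; funext i
      simp [Real.mul_self_sqrt (hP.eigenvalues_nonneg i)]
    conv_rhs => rw [hP.1.spectral_theorem, Unitary.conjStarAlgAut_apply]
    simp only [Matrix.PosSemidef.sqrtOld]
    calc _ = hP.1.eigenvectorUnitary.1 * diagonal ((↑) ∘ (√·) ∘ hP.1.eigenvalues) *
        ((star hP.1.eigenvectorUnitary : Matrix (Fin d) (Fin d) ℝ) * hP.1.eigenvectorUnitary.1) *
        diagonal ((↑) ∘ (√·) ∘ hP.1.eigenvalues) * (star hP.1.eigenvectorUnitary : Matrix (Fin d) (Fin d) ℝ) := by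
          simp only [Matrix.mul_assoc]
      _ = _ := by rw [hUU, Matrix.mul_one, Matrix.mul_assoc _ (diagonal _) (diagonal _), hD]
  have hrhs : ((W - Wbar)ᵀ * hSig_pd.posSemidef.sqrtOld)
      * (hSig_pd.posSemidef.sqrtOld * (W - Wbar))
      = (W - Wbar)ᵀ * Sig * (W - Wbar) := by
    rw [Matrix.mul_assoc, ← Matrix.mul_assoc hSig_pd.posSemidef.sqrtOld, hs,
      ← Matrix.mul_assoc]
  rw [hrhs, ← key]
  ring
end

section
/- Let k be a measurable kernel with sup_x k(x,x) < ∞, let k̄(x,y) = ∫_G k(x,gy) dλ(g) and k⊥ = k − k̄, and let μ be a G-invariant probability measure. Then N[k] = N[k̄] + N[k⊥], where N[j] = ∫∫ j(x,y)² dμ(x) dμ(y) for j : X × X → ℝ. -/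
open MeasureTheory

private lemma bdd_integrable {α : Type*} [MeasurableSpace α] (ν : Measure α) [IsFiniteMeasure ν]
    {f : α → ℝ} (hf : AEStronglyMeasurable f ν) {C : ℝ} (h : ∀ a, |f a| ≤ C) :
    Integrable f ν :=
  Integrable.mono' (integrable_const C) hf (Filter.Eventually.of_forall fun a => by
    simpa using h a)

open scoped ENNReal

/-- The Pythagorean decomposition `N[k] = N[k̄] + N[k⊥]` of the squared
`L2(μ⊗μ)`-norm of a bounded measurable kernel, where `k̄(x,y) = ∫_G k(x, gy) dλ(g)`
and `k⊥ = k − k̄`. -/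
theorem stmt_15 {G X : Type*} [Group G] [TopologicalSpace G] [IsTopologicalGroup G]
    [CompactSpace G] [SecondCountableTopology G] [T2Space G]
    [MeasurableSpace G] [BorelSpace G]
    [TopologicalSpace X] [PolishSpace X] [MeasurableSpace X] [BorelSpace X]
    (lam : Measure G) [IsProbabilityMeasure lam]
    (hlam_left : ∀ g : G, Measure.map (fun h => g * h) lam = lam)
    (hlam_inv : Measure.map (fun g : G => g⁻¹) lam = lam)
    (φ : G → X → X)
    (hφ_meas : Measurable fun p : G × X => φ p.1 p.2)
    (hφ_one : ∀ x, φ 1 x = x)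
    (hφ_mul : ∀ g h x, φ (g * h) x = φ g (φ h x))
    (μ : Measure X) [IsProbabilityMeasure μ]
    (hμ_inv : ∀ g : G, Measure.map (φ g) μ = μ)
    (kk : X → X → ℝ)
    (hk_meas : Measurable fun p : X × X => kk p.1 p.2)
    (hk_symm : ∀ x y, kk x y = kk y x)
    (hk_pos : ∀ (m : ℕ) (xs : Fin m → X), Function.Injective xs →
      (Matrix.of fun i j => kk (xs i) (xs j)).PosSemidef)
    (Mk : ℝ)
    (hMk : IsLUB (Set.range fun x => kk x x) Mk) :
    ∫ x, ∫ y, kk x y ^ 2 ∂μ ∂μ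
      = (∫ x, ∫ y, (∫ g, kk x (φ g y) ∂lam) ^ 2 ∂μ ∂μ)
        + ∫ x, ∫ y, (kk x y - ∫ g, kk x (φ g y) ∂lam) ^ 2 ∂μ ∂μ := by
  classical
  have hXne : Nonempty X := by
    by_contra h
    rw [not_nonempty_iff] at h
    have h1 : μ Set.univ = 1 := measure_univ
    rw [μ.eq_zero_of_isEmpty] at h1
    simp at h1
  have hφg : ∀ g : G, Measurable (φ g) := fun g =>
    hφ_meas.comp (measurable_const.prodMk measurable_id)
  have hdiag_le : ∀ x, kk x x ≤ Mk := fun x => hMk.1 ⟨x, rfl⟩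
  -- the kernel is uniformly bounded by `Mk`
  have hbound : ∀ x y, |kk x y| ≤ Mk := by
    intro x y
    by_cases hxy : x = y
    · subst hxy
      have h0 : 0 ≤ kk x x := by
        have h := (Matrix.posSemidef_iff_dotProduct_mulVec.mp (hk_pos 1 (fun _ => x) (Function.injective_of_subsingleton _))).2 ![1]
        simpa [dotProduct, Matrix.mulVec, Fin.sum_univ_one] using h
      rw [abs_of_nonneg h0]; exact hdiag_le x
    · have hinj : Function.Injective ![x, y] := by
        intro i j hij
        fin_cases i <;> fin_cases j <;> simp_all
      have h := hk_pos 2 ![x, y] hinj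
      have h1 := (Matrix.posSemidef_iff_dotProduct_mulVec.mp h).2 ![1, 1]
      have h2 := (Matrix.posSemidef_iff_dotProduct_mulVec.mp h).2 ![1, -1]
      simp [dotProduct, Matrix.mulVec, Fin.sum_univ_two] at h1 h2
      have hx := hdiag_le x; have hy := hdiag_le y
      rw [abs_le]
      constructor <;> nlinarith [hk_symm x y]
  have hMk0 : 0 ≤ Mk :=
    le_trans (abs_nonneg _) (hbound hXne.some hXne.some)
  set kbar : X → X → ℝ := fun x y => ∫ g, kk x (φ g y) ∂lam with hkbar_def
  -- measurability facts
  have hmeas_big : Measurable (fun q : (X × X) × G => kk q.1.1 (φ q.2 q.1.2)) :=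
    hk_meas.comp ((measurable_fst.comp measurable_fst).prodMk
      (hφ_meas.comp (measurable_snd.prodMk (measurable_snd.comp measurable_fst))))
  have hkbar_sm : StronglyMeasurable (fun p : X × X => kbar p.1 p.2) :=
    hmeas_big.stronglyMeasurable.integral_prod_right'
  have hsec : ∀ x y, Measurable fun g : G => kk x (φ g y) := fun x y =>
    hk_meas.comp (measurable_const.prodMk
      (hφ_meas.comp (measurable_id.prodMk measurable_const)))
  have hbound_kbar : ∀ x y, |kbar x y| ≤ Mk := by
    intro x y
    have := norm_integral_le_of_norm_le_const (μ := lam)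
      (f := fun g => kk x (φ g y)) (C := Mk)
      (Filter.Eventually.of_forall fun g => by simpa using hbound x (φ g y))
    simpa [hkbar_def] using this
  -- right invariance of `lam`
  have hlam_right : ∀ h : G, Measure.map (fun g => g * h) lam = lam := by
    intro h
    have hcomp : (fun g : G => g * h)
        = (fun g : G => g⁻¹) ∘ ((fun g : G => h⁻¹ * g) ∘ fun g : G => g⁻¹) := by
      funext g; simp [Function.comp]
    rw [hcomp, ← Measure.map_map measurable_inv
        ((measurable_const_mul h⁻¹).comp measurable_inv),
      ← Measure.map_map (measurable_const_mul h⁻¹) measurable_inv,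
      hlam_inv, hlam_left, hlam_inv]
  -- invariance of `kbar` in the second variable
  have hkbar_inv : ∀ (x : X) (h : G) (y : X), kbar x (φ h y) = kbar x y := by
    intro x h y
    have e1 : (fun g => kk x (φ g (φ h y))) = fun g => kk x (φ (g * h) y) := by
      funext g; rw [← hφ_mul]
    have hm : AEStronglyMeasurable (fun g : G => kk x (φ g y))
        (Measure.map (fun g : G => g * h) lam) := by
      rw [hlam_right]
      exact (hsec x y).aestronglyMeasurable
    have hi := integral_map (μ := lam) (φ := fun g : G => g * h)
      (f := fun g => kk x (φ g y)) (measurable_mul_const h).aemeasurable hm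
    rw [hlam_right] at hi
    show (∫ g, kk x (φ g (φ h y)) ∂lam) = ∫ g, kk x (φ g y) ∂lam
    rw [e1]
    exact hi.symm
  -- change of variables in `μ`
  have hμ_cov : ∀ (g : G) (F : X → ℝ), Measurable F →
      (∫ y, F (φ g y) ∂μ) = ∫ y, F y ∂μ := by
    intro g F hF
    have := integral_map (μ := μ) (φ := φ g) (f := F) (hφg g).aemeasurable
      (by rw [hμ_inv]; exact hF.aestronglyMeasurable)
    rw [hμ_inv] at this
    exact this.symm
  have hbx : ∀ x, Measurable (fun y => kbar x y) := fun x =>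
    hkbar_sm.measurable.comp (measurable_const.prodMk measurable_id)
  have hfx : ∀ x, Measurable (fun y => kk x y) := fun x =>
    hk_meas.comp (measurable_const.prodMk measurable_id)
  -- the key orthogonality identity
  have key : ∀ x : X, (∫ y, kbar x y * kk x y ∂μ) = ∫ y, kbar x y * kbar x y ∂μ := by
    intro x
    have step1 : ∀ g : G,
        (∫ y, kbar x y * kk x y ∂μ) = ∫ y, kbar x y * kk x (φ g y) ∂μ := by
      intro g
      have hF : Measurable (fun y => kbar x y * kk x y) := (hbx x).mul (hfx x)
      have h0 := hμ_cov g _ hF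
      rw [← h0]
      refine integral_congr_ae (Filter.Eventually.of_forall fun y => ?_)
      show kbar x (φ g y) * kk x (φ g y) = kbar x y * kk x (φ g y)
      rw [hkbar_inv x g y]
    have hInt : Integrable
        (Function.uncurry fun (g : G) (y : X) => kbar x y * kk x (φ g y))
        (lam.prod μ) := by
      apply bdd_integrable _ ?_ (C := Mk * Mk) ?_
      · exact (((hbx x).comp measurable_snd).mul
          (hk_meas.comp (measurable_const.prodMk hφ_meas))).aestronglyMeasurable
      · rintro ⟨g, y⟩
        simp only [Function.uncurry_apply_pair]
        rw [abs_mul]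
        exact mul_le_mul (hbound_kbar x y) (hbound x (φ g y)) (abs_nonneg _) hMk0
    calc ∫ y, kbar x y * kk x y ∂μ
        = ∫ _g : G, (∫ y, kbar x y * kk x y ∂μ) ∂lam := by
          rw [integral_const]; simp
      _ = ∫ g, ∫ y, kbar x y * kk x (φ g y) ∂μ ∂lam :=
          integral_congr_ae (Filter.Eventually.of_forall step1)
      _ = ∫ y, ∫ g, kbar x y * kk x (φ g y) ∂lam ∂μ := integral_integral_swap hInt
      _ = ∫ y, kbar x y * kbar x y ∂μ := by
          refine integral_congr_ae (Filter.Eventually.of_forall fun y => ?_)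
          show (∫ g, kbar x y * kk x (φ g y) ∂lam) = kbar x y * kbar x y
          rw [integral_const_mul]
  -- per-`x` inner decomposition
  have inner_eq : ∀ x : X, (∫ y, kk x y ^ 2 ∂μ)
      = (∫ y, kbar x y ^ 2 ∂μ) + ∫ y, (kk x y - kbar x y) ^ 2 ∂μ := by
    intro x
    have hIb2 : Integrable (fun y => kbar x y ^ 2) μ := by
      apply bdd_integrable _ ((hbx x).pow_const 2).aestronglyMeasurable (C := Mk ^ 2)
      intro y; rw [abs_pow]
      exact pow_le_pow_left₀ (abs_nonneg _) (hbound_kbar x y) 2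
    have hIp2 : Integrable (fun y => (kk x y - kbar x y) ^ 2) μ := by
      apply bdd_integrable _ (((hfx x).sub (hbx x)).pow_const 2).aestronglyMeasurable
        (C := (2 * Mk) ^ 2)
      intro y; rw [abs_pow]
      refine pow_le_pow_left₀ (abs_nonneg _) ?_ 2
      calc |kk x y - kbar x y| ≤ |kk x y| + |kbar x y| := abs_sub _ _
        _ ≤ 2 * Mk := by have := hbound x y; have := hbound_kbar x y; linarith
    have hIbf : Integrable (fun y => kbar x y * kk x y) μ := by
      apply bdd_integrable _ ((hbx x).mul (hfx x)).aestronglyMeasurable (C := Mk * Mk)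
      intro y; rw [Pi.mul_apply, abs_mul]
      exact mul_le_mul (hbound_kbar x y) (hbound x y) (abs_nonneg _) hMk0
    have hIbb : Integrable (fun y => kbar x y * kbar x y) μ := by
      apply bdd_integrable _ ((hbx x).mul (hbx x)).aestronglyMeasurable (C := Mk * Mk)
      intro y; rw [Pi.mul_apply, abs_mul]
      exact mul_le_mul (hbound_kbar x y) (hbound_kbar x y) (abs_nonneg _) hMk0
    have expand : ∀ y, kk x y ^ 2
        = kbar x y ^ 2 + (kk x y - kbar x y) ^ 2 + 2 * (kbar x y * kk x y)
            - 2 * (kbar x y * kbar x y) := by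
      intro y; ring
    calc ∫ y, kk x y ^ 2 ∂μ
        = ∫ y, (kbar x y ^ 2 + (kk x y - kbar x y) ^ 2 + 2 * (kbar x y * kk x y)
            - 2 * (kbar x y * kbar x y)) ∂μ :=
          integral_congr_ae (Filter.Eventually.of_forall expand)
      _ = (∫ y, kbar x y ^ 2 ∂μ) + ∫ y, (kk x y - kbar x y) ^ 2 ∂μ := by
          rw [integral_sub, integral_add, integral_add, integral_const_mul,
            integral_const_mul, key x]
          · ring
          all_goals first
            | exact hIb2 | exact hIp2 | exact hIb2.add hIp2
            | exact hIbf.const_mul 2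
            | exact (hIb2.add hIp2).add (hIbf.const_mul 2)
            | exact hIbb.const_mul 2
  -- outer integrability
  have houter1 : Integrable (fun x => ∫ y, kbar x y ^ 2 ∂μ) μ := by
    apply bdd_integrable _
      ((hkbar_sm.measurable.pow_const 2).stronglyMeasurable.integral_prod_right').aestronglyMeasurable
      (C := Mk ^ 2)
    intro x
    have := norm_integral_le_of_norm_le_const (μ := μ)
      (f := fun y => kbar x y ^ 2) (C := Mk ^ 2)
      (Filter.Eventually.of_forall fun y => by
        simp only [Real.norm_eq_abs, abs_pow]
        exact pow_le_pow_left₀ (abs_nonneg _) (hbound_kbar x y) 2)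
    simpa using this
  have houter2 : Integrable (fun x => ∫ y, (kk x y - kbar x y) ^ 2 ∂μ) μ := by
    apply bdd_integrable _
      (((hk_meas.sub hkbar_sm.measurable).pow_const 2).stronglyMeasurable.integral_prod_right').aestronglyMeasurable
      (C := (2 * Mk) ^ 2)
    intro x
    have := norm_integral_le_of_norm_le_const (μ := μ)
      (f := fun y => (kk x y - kbar x y) ^ 2) (C := (2 * Mk) ^ 2)
      (Filter.Eventually.of_forall fun y => by
        simp only [Real.norm_eq_abs, abs_pow]
        refine pow_le_pow_left₀ (abs_nonneg _) ?_ 2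
        calc |kk x y - kbar x y| ≤ |kk x y| + |kbar x y| := abs_sub _ _
          _ ≤ 2 * Mk := by have := hbound x y; have := hbound_kbar x y; linarith)
    simpa using this
  rw [← integral_add houter1 houter2]
  exact integral_congr_ae (Filter.Eventually.of_forall inner_eq)
end

section
/- Let X be a set, Y ⊆ ℝ^d convex, and F a class of measurable functions f : X → Y. Let ℓ : Y × Y → ℝ₊ be measurable with ℓ(y,y′) ≤ M for all y, y′, and Lipschitz in its first argument: |ℓ(y₁,y′) − ℓ(y₂,y′)| ≤ C_ℓ ‖y₁ − y₂‖_∞ with C_ℓ independent of y₁, y₂, y′. Let S = ((X₁,Y₁),…,(Xₙ,Yₙ)) be n i.i.d. copies of an arbitrary pair (X,Y) with values in X × Y. Then for all ε > 0: P( sup_{f∈F} | E[ℓ(f(X),Y)] − (1/n) Σ_{i=1}^n ℓ(f(X_i),Y_i) | ≥ ε ) ≤ 2 inf_{α∈(0,1)} 𝒩(F, ‖·‖_∞, αε/(2C_ℓ)) · exp( −(1/8)(1−α)² n ε² M⁻² ), where 𝒩(F, ‖·‖_∞, κ) is the κ-covering number of F in the uniform norm ‖f‖_∞ = sup_x ‖f(x)‖_∞.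 -/
open MeasureTheory ProbabilityTheory
open scoped ENNReal NNReal

/-- The `κ`-covering number of a set `U` in a space carrying an extended distance
`ed`: the smallest cardinality of a finite set `K` such that every `u ∈ U` is within
`κ` of some element of `K` (and `⊤` if no finite cover exists). -/
noncomputable def coverNum {T : Type*} (ed : T → T → ℝ≥0∞) (U : Set T) (κ : ℝ) : ℝ≥0∞ :=
  ⨅ (K : Finset T) (_ : ∀ u ∈ U, ∃ v ∈ K, ed u v ≤ ENNReal.ofReal κ), (K.card : ℝ≥0∞)

/-- The uniform (sup) extended distance between two functions with values in `ℝ^d`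
equipped with the max-magnitude norm. -/
noncomputable def unifEdist {X : Type*} {d : ℕ} (f g : X → Fin d → ℝ) : ℝ≥0∞ :=
  ⨆ x, (‖f x - g x‖₊ : ℝ≥0∞)

section Aux
open Real

lemma aux_mgf_le {Ω : Type*} [MeasurableSpace Ω] (P : Measure Ω) [IsProbabilityMeasure P]
    (Y : Ω → ℝ) (hY : Measurable Y) (B : ℝ) (hB : 0 < B)
    (hbdd : ∀ᵐ ω ∂P, |Y ω| ≤ B) (hmean : ∫ ω, Y ω ∂P = 0) (l : ℝ) :
    mgf Y P l ≤ Real.exp (l ^ 2 * B ^ 2 / 2) := by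
  have hYint : Integrable Y P := by
    refine (integrable_const B).mono' hY.aestronglyMeasurable ?_
    filter_upwards [hbdd] with ω h using by simpa [Real.norm_eq_abs] using h
  have hint : Integrable (fun ω => Real.exp (l * Y ω)) P := by
    refine (integrable_const (Real.exp (|l| * B))).mono'
      ((hY.const_mul l).exp).aestronglyMeasurable ?_
    filter_upwards [hbdd] with ω h
    rw [Real.norm_eq_abs, abs_of_pos (Real.exp_pos _), Real.exp_le_exp]
    calc l * Y ω ≤ |l * Y ω| := le_abs_self _
      _ = |l| * |Y ω| := abs_mul _ _
      _ ≤ |l| * B := by gcongr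
  have key : ∀ᵐ ω ∂P,
      Real.exp (l * Y ω) ≤ Real.cosh (l * B) + (Y ω / B) * Real.sinh (l * B) := by
    filter_upwards [hbdd] with ω h
    have ht : |Y ω / B| ≤ 1 := by
      rw [abs_div, abs_of_pos hB, div_le_one hB]; exact h
    have := Real.exp_mul_le_cosh_add_mul_sinh ht (l * B)
    have heq : Y ω / B * (l * B) = l * Y ω := by field_simp
    rwa [heq] at this
  have h2 : Integrable (fun ω => Real.cosh (l * B) + (Y ω / B) * Real.sinh (l * B)) P := by
    exact (integrable_const _).add ((hYint.div_const B).mul_const _)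
  calc mgf Y P l = ∫ ω, Real.exp (l * Y ω) ∂P := rfl
    _ ≤ ∫ ω, (Real.cosh (l * B) + (Y ω / B) * Real.sinh (l * B)) ∂P :=
        integral_mono_ae hint h2 key
    _ = Real.cosh (l * B) := by
        rw [integral_add (integrable_const _) ((hYint.div_const B).mul_const _)]
        simp [integral_mul_const, integral_div, hmean]
    _ ≤ Real.exp ((l * B) ^ 2 / 2) := Real.cosh_le_exp_half_sq _
    _ = Real.exp (l ^ 2 * B ^ 2 / 2) := by ring_nf

lemma aux_tail {Ω : Type*} [MeasurableSpace Ω] (P : Measure Ω) [IsProbabilityMeasure P]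
    {n : ℕ} (Y : Fin n → Ω → ℝ) (hmeas : ∀ i, Measurable (Y i))
    (hind : iIndepFun Y P)
    (M : ℝ) (hM : 0 < M) (hbdd : ∀ i, ∀ᵐ ω ∂P, |Y i ω| ≤ M)
    (hmean : ∀ i, ∫ ω, Y i ω ∂P = 0) (t : ℝ) (ht : 0 ≤ t) :
    P {ω | (n : ℝ) * t ≤ ∑ i, Y i ω}
      ≤ ENNReal.ofReal (Real.exp (-(n * t ^ 2) / (2 * M ^ 2))) := by
  set l : ℝ := t / M ^ 2 with hl
  have hl0 : 0 ≤ l := div_nonneg ht (by positivity)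
  have hint : ∀ i, Integrable (fun ω => Real.exp (l * Y i ω)) P := by
    intro i
    refine (integrable_const (Real.exp (|l| * M))).mono'
      (((hmeas i).const_mul l).exp).aestronglyMeasurable ?_
    filter_upwards [hbdd i] with ω h
    rw [Real.norm_eq_abs, abs_of_pos (Real.exp_pos _), Real.exp_le_exp]
    calc l * Y i ω ≤ |l * Y i ω| := le_abs_self _
      _ = |l| * |Y i ω| := abs_mul _ _
      _ ≤ |l| * M := by gcongr
  have hintS : Integrable (fun ω => Real.exp (l * (∑ i, Y i) ω)) P :=
    hind.integrable_exp_mul_sum hmeas (fun i _ => hint i)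
  have hchern := measure_ge_le_exp_mul_mgf (X := ∑ i, Y i) (μ := P) ((n : ℝ) * t) hl0 hintS
  have hmgf : mgf (∑ i, Y i) P l ≤ Real.exp ((n : ℝ) * (l ^ 2 * M ^ 2 / 2)) := by
    rw [hind.mgf_sum hmeas Finset.univ]
    calc ∏ i, mgf (Y i) P l ≤ ∏ _i : Fin n, Real.exp (l ^ 2 * M ^ 2 / 2) :=
          Finset.prod_le_prod (fun i _ => mgf_nonneg)
            (fun i _ => aux_mgf_le P (Y i) (hmeas i) M hM (hbdd i) (hmean i) l)
      _ = Real.exp ((n : ℝ) * (l ^ 2 * M ^ 2 / 2)) := by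
          rw [Finset.prod_const, Finset.card_univ, Fintype.card_fin, ← Real.exp_nat_mul]
  have hset : {ω | (n : ℝ) * t ≤ ∑ i, Y i ω} = {ω | (n : ℝ) * t ≤ (∑ i, Y i) ω} := by
    ext ω; simp [Finset.sum_apply]
  have hbound : (P {ω | (n : ℝ) * t ≤ ∑ i, Y i ω}).toReal
      ≤ Real.exp (-(n * t ^ 2) / (2 * M ^ 2)) := by
    rw [hset]
    refine hchern.trans ?_
    calc Real.exp (-l * ((n : ℝ) * t)) * mgf (∑ i, Y i) P l
        ≤ Real.exp (-l * ((n : ℝ) * t)) * Real.exp ((n : ℝ) * (l ^ 2 * M ^ 2 / 2)) := by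
          gcongr
      _ = Real.exp (-l * ((n : ℝ) * t) + (n : ℝ) * (l ^ 2 * M ^ 2 / 2)) := by
          rw [← Real.exp_add]
      _ = Real.exp (-(n * t ^ 2) / (2 * M ^ 2)) := by
          congr 1
          have hM0 : (M : ℝ) ≠ 0 := ne_of_gt hM
          field_simp [hl]
          have hlM : l * M ^ 2 = t := by rw [hl]; field_simp
          linear_combination (↑n * (l * M ^ 2 - t)) * hlM
  rw [← ENNReal.ofReal_toReal (measure_ne_top P _)]
  exact ENNReal.ofReal_le_ofReal hbound

lemma coverNum_attained {T : Type*} (ed : T → T → ℝ≥0∞) (U : Set T) (κ : ℝ)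
    (h : ∃ K : Finset T, ∀ u ∈ U, ∃ v ∈ K, ed u v ≤ ENNReal.ofReal κ) :
    ∃ K : Finset T, (∀ u ∈ U, ∃ v ∈ K, ed u v ≤ ENNReal.ofReal κ) ∧
      coverNum ed U κ = K.card := by
  classical
  set s : Set ℕ := {m : ℕ | ∃ K : Finset T,
    (∀ u ∈ U, ∃ v ∈ K, ed u v ≤ ENNReal.ofReal κ) ∧ K.card = m} with hs
  have hsne : s.Nonempty := by obtain ⟨K, hK⟩ := h; exact ⟨K.card, K, hK, rfl⟩
  obtain ⟨K, hK, hKcard⟩ := Nat.sInf_mem hsne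
  refine ⟨K, hK, le_antisymm ?_ ?_⟩
  · exact iInf₂_le K hK
  · refine le_iInf₂ fun K' hK' => ?_
    rw [hKcard]
    have hmem : K'.card ∈ s := ⟨K', hK', rfl⟩
    exact_mod_cast Nat.cast_le.2 (Nat.sInf_le hmem)

end Aux

set_option maxHeartbeats 2000000 in
/-- Uniform concentration over a function class `F` via covering numbers in the
uniform norm, for a bounded loss that is Lipschitz in its first argument. -/
theorem stmt_17 {Xs : Type*} [MeasurableSpace Xs] {d : ℕ}
    (Yset : Set (Fin d → ℝ)) (hY_conv : Convex ℝ Yset)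
    (F : Set (Xs → Fin d → ℝ))
    (hF_meas : ∀ f ∈ F, Measurable f)
    (hF_maps : ∀ f ∈ F, ∀ x, f x ∈ Yset)
    (ℓ : (Fin d → ℝ) → (Fin d → ℝ) → ℝ)
    (hℓ_meas : Measurable fun p : (Fin d → ℝ) × (Fin d → ℝ) => ℓ p.1 p.2)
    (M Cℓ : ℝ)
    (hℓ_nonneg : ∀ y y', y ∈ Yset → y' ∈ Yset → 0 ≤ ℓ y y')
    (hℓ_bdd : ∀ y y', y ∈ Yset → y' ∈ Yset → ℓ y y' ≤ M)
    (hℓ_lip : ∀ y₁ y₂ y', y₁ ∈ Yset → y₂ ∈ Yset → y' ∈ Yset →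
      |ℓ y₁ y' - ℓ y₂ y'| ≤ Cℓ * ‖y₁ - y₂‖)
    {n : ℕ} {Ω : Type*} [MeasurableSpace Ω] (P : Measure Ω) [IsProbabilityMeasure P]
    (η : Measure (Xs × (Fin d → ℝ))) [IsProbabilityMeasure η]
    (hη_Y : ∀ᵐ p ∂η, p.2 ∈ Yset)
    (Z : Fin n → Ω → Xs × (Fin d → ℝ))
    (hZ_meas : ∀ i, Measurable (Z i))
    (hZ_iid : iIndepFun Z P)
    (hZ_law : ∀ i, Measure.map (Z i) P = η)
    (ε : ℝ) (hε : 0 < ε) :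
    P {ω | ε ≤ ⨆ f ∈ F,
        |(∫ p, ℓ (f p.1) p.2 ∂η)
          - (n : ℝ)⁻¹ * ∑ i, ℓ (f (Z i ω).1) (Z i ω).2|}
      ≤ 2 * ⨅ α ∈ Set.Ioo (0 : ℝ) 1,
          coverNum unifEdist F (α * ε / (2 * Cℓ))
            * ENNReal.ofReal
                (Real.exp (-(1 / 8) * (1 - α) ^ 2 * n * ε ^ 2 / M ^ 2)) := by
  classical
  -- Case: F empty
  by_cases hFe : F = ∅
  · have hzero : ∀ ω : Ω, (⨆ f ∈ F,
        |(∫ p, ℓ (f p.1) p.2 ∂η)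
          - (n : ℝ)⁻¹ * ∑ i, ℓ (f (Z i ω).1) (Z i ω).2|) = 0 := by
      intro ω
      rw [hFe]
      simp only [Set.mem_empty_iff_false]
      have : ∀ f : Xs → Fin d → ℝ, (⨆ _ : False,
          |(∫ p, ℓ (f p.1) p.2 ∂η)
            - (n : ℝ)⁻¹ * ∑ i, ℓ (f (Z i ω).1) (Z i ω).2|) = 0 := fun f =>
        Real.iSup_of_isEmpty _
      simp only [this, ciSup_const]
    have hempty : {ω | ε ≤ ⨆ f ∈ F,
        |(∫ p, ℓ (f p.1) p.2 ∂η)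
          - (n : ℝ)⁻¹ * ∑ i, ℓ (f (Z i ω).1) (Z i ω).2|} = ∅ := by
      ext ω
      simp only [Set.mem_setOf_eq, Set.mem_empty_iff_false, iff_false, not_le, hzero ω]
      exact hε
    rw [hempty]
    simp
  obtain ⟨f₀, hf₀⟩ := Set.nonempty_iff_ne_empty.2 hFe
  -- Yset is nonempty
  have hηne : η ≠ 0 := IsProbabilityMeasure.ne_zero η
  haveI : (MeasureTheory.ae η).NeBot := ae_neBot.2 hηne
  obtain ⟨p₀, hp₀⟩ := hη_Y.exists
  have hM0 : 0 ≤ M := le_trans (hℓ_nonneg _ _ hp₀ hp₀) (hℓ_bdd _ _ hp₀ hp₀)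
  -- coverNum is at least one
  have hcov1 : ∀ κ' : ℝ, (1 : ℝ≥0∞) ≤ coverNum unifEdist F κ' := by
    intro κ'
    refine le_iInf fun K => le_iInf fun hK => ?_
    obtain ⟨v, hv, -⟩ := hK f₀ hf₀
    have : 1 ≤ K.card := Finset.card_pos.2 ⟨v, hv⟩
    exact_mod_cast Nat.cast_le.2 this
  -- Degenerate case : M = 0 or n = 0
  by_cases hdeg : M = 0 ∨ n = 0
  · have hexp0 : ∀ α : ℝ, (-(1 / 8) * (1 - α) ^ 2 * (n : ℝ) * ε ^ 2 / M ^ 2 : ℝ) = 0 := by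
      intro α
      rcases hdeg with h | h
      · rw [h]; simp
      · rw [h]; push_cast; ring
    have h1 : (1 : ℝ≥0∞) ≤ 2 * ⨅ α ∈ Set.Ioo (0 : ℝ) 1,
        coverNum unifEdist F (α * ε / (2 * Cℓ))
          * ENNReal.ofReal (Real.exp (-(1 / 8) * (1 - α) ^ 2 * n * ε ^ 2 / M ^ 2)) := by
      have h2 : (1 : ℝ≥0∞) ≤ ⨅ α ∈ Set.Ioo (0 : ℝ) 1,
          coverNum unifEdist F (α * ε / (2 * Cℓ))
            * ENNReal.ofReal (Real.exp (-(1 / 8) * (1 - α) ^ 2 * n * ε ^ 2 / M ^ 2)) := by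
        refine le_iInf₂ fun α hα => ?_
        rw [hexp0 α, Real.exp_zero, ENNReal.ofReal_one, mul_one]
        exact hcov1 _
      calc (1 : ℝ≥0∞) ≤ ⨅ α ∈ Set.Ioo (0 : ℝ) 1, _ := h2
        _ ≤ 2 * ⨅ α ∈ Set.Ioo (0 : ℝ) 1, _ := le_mul_of_one_le_left zero_le one_le_two
    exact le_trans prob_le_one h1
  push_neg at hdeg
  have hM : 0 < M := lt_of_le_of_ne hM0 (Ne.symm hdeg.1)
  have hn : 0 < n := Nat.pos_of_ne_zero hdeg.2
  have hn' : (0 : ℝ) < n := by exact_mod_cast hn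
  suffices main : ∀ α : ℝ, α ∈ Set.Ioo (0 : ℝ) 1 → P {ω | ε ≤ ⨆ f ∈ F,
        |(∫ p, ℓ (f p.1) p.2 ∂η)
          - (n : ℝ)⁻¹ * ∑ i, ℓ (f (Z i ω).1) (Z i ω).2|}
      ≤ 2 * (coverNum unifEdist F (α * ε / (2 * Cℓ))
            * ENNReal.ofReal
                (Real.exp (-(1 / 8) * (1 - α) ^ 2 * n * ε ^ 2 / M ^ 2))) by
    have h2 : P {ω | ε ≤ ⨆ f ∈ F,
        |(∫ p, ℓ (f p.1) p.2 ∂η)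
          - (n : ℝ)⁻¹ * ∑ i, ℓ (f (Z i ω).1) (Z i ω).2|} / 2
        ≤ ⨅ α ∈ Set.Ioo (0 : ℝ) 1,
          coverNum unifEdist F (α * ε / (2 * Cℓ))
            * ENNReal.ofReal
                (Real.exp (-(1 / 8) * (1 - α) ^ 2 * n * ε ^ 2 / M ^ 2)) :=
      le_iInf₂ fun α hα => ENNReal.div_le_of_le_mul' (main α hα)
    calc P {ω | ε ≤ ⨆ f ∈ F,
        |(∫ p, ℓ (f p.1) p.2 ∂η)
          - (n : ℝ)⁻¹ * ∑ i, ℓ (f (Z i ω).1) (Z i ω).2|}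
        = P {ω | ε ≤ ⨆ f ∈ F,
        |(∫ p, ℓ (f p.1) p.2 ∂η)
          - (n : ℝ)⁻¹ * ∑ i, ℓ (f (Z i ω).1) (Z i ω).2|} / 2 * 2 := by
          rw [ENNReal.div_mul_cancel (by norm_num) (by norm_num)]
      _ ≤ (⨅ α ∈ Set.Ioo (0 : ℝ) 1,
          coverNum unifEdist F (α * ε / (2 * Cℓ))
            * ENNReal.ofReal
                (Real.exp (-(1 / 8) * (1 - α) ^ 2 * n * ε ^ 2 / M ^ 2))) * 2 :=
          mul_le_mul_left h2 2
      _ = _ := mul_comm _ _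
  intro α hα
  obtain ⟨hα0, hα1⟩ := hα
  have h1α : (0 : ℝ) < 1 - α := by linarith
  have hαε : (0 : ℝ) < α * ε := mul_pos hα0 hε
  -- if no finite cover exists, the bound is trivial
  by_cases hcov : ∃ K : Finset (Xs → Fin d → ℝ),
      ∀ u ∈ F, ∃ v ∈ K, unifEdist u v ≤ ENNReal.ofReal (α * ε / (2 * Cℓ))
  swap
  · have htop : coverNum unifEdist F (α * ε / (2 * Cℓ)) = ⊤ := by
      rw [coverNum]
      refine iInf_eq_top.2 fun K => iInf_neg fun hK => hcov ⟨K, hK⟩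
    rw [htop, ENNReal.top_mul (by
      simp only [ne_eq, ENNReal.ofReal_eq_zero, not_le]
      exact Real.exp_pos _), ENNReal.mul_top (by norm_num)]
    exact le_top
  obtain ⟨K, hK, hNcard⟩ := coverNum_attained unifEdist F (α * ε / (2 * Cℓ)) hcov
  -- basic measurability / integrability facts
  have hfmeas : ∀ f, f ∈ F → Measurable fun p : Xs × (Fin d → ℝ) => ℓ (f p.1) p.2 :=
    fun f hf => hℓ_meas.comp (((hF_meas f hf).comp measurable_fst).prodMk measurable_snd)
  have hae_bdd : ∀ f, f ∈ F →
      ∀ᵐ p ∂η, 0 ≤ ℓ (f p.1) p.2 ∧ ℓ (f p.1) p.2 ≤ M := by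
    intro f hf
    filter_upwards [hη_Y] with p hp
    exact ⟨hℓ_nonneg _ _ (hF_maps f hf p.1) hp, hℓ_bdd _ _ (hF_maps f hf p.1) hp⟩
  have hInt : ∀ f, f ∈ F → Integrable (fun p => ℓ (f p.1) p.2) η := by
    intro f hf
    refine (integrable_const M).mono' (hfmeas f hf).aestronglyMeasurable ?_
    filter_upwards [hae_bdd f hf] with p hp
    rw [Real.norm_eq_abs, abs_le]
    exact ⟨by linarith [hp.1], hp.2⟩
  have hμ0 : ∀ f, f ∈ F → 0 ≤ ∫ p, ℓ (f p.1) p.2 ∂η := fun f hf =>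
    integral_nonneg_of_ae ((hae_bdd f hf).mono fun p hp => hp.1)
  have hμM : ∀ f, f ∈ F → (∫ p, ℓ (f p.1) p.2 ∂η) ≤ M := by
    intro f hf
    have h := integral_mono_ae (hInt f hf) (integrable_const M)
      ((hae_bdd f hf).mono fun p hp => hp.2)
    simpa [measure_univ] using h
  -- the null set where the second coordinate escapes Yset
  have hnull : η {p : Xs × (Fin d → ℝ) | ¬ p.2 ∈ Yset} = 0 := ae_iff.1 hη_Y
  obtain ⟨Bad, hBadsub, hBadmeas, hBad0⟩ := exists_measurable_superset_of_null hnull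
  have hPN : P (⋃ i, Z i ⁻¹' Bad) = 0 := by
    refine measure_iUnion_null fun i => ?_
    have h1 : P (Z i ⁻¹' Bad) = η Bad := by
      rw [← hZ_law i, Measure.map_apply (hZ_meas i) hBadmeas]
    rw [h1]; exact hBad0
  have hgood : ∀ ω, ω ∉ (⋃ i, Z i ⁻¹' Bad) → ∀ i, (Z i ω).2 ∈ Yset := by
    intro ω hω i
    by_contra hmem
    exact hω (Set.mem_iUnion.2 ⟨i, hBadsub hmem⟩)
  set δ : ℝ := (1 - α) * ε / 8 with hδdef
  set t : ℝ := (1 - α) * ε / 2 with htdef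
  have hδ : 0 < δ := by rw [hδdef]; positivity
  have ht : 0 < t := by rw [htdef]; positivity
  -- choice of near-extremal representatives in each covering fiber
  have hchoice : ∀ g : Xs → Fin d → ℝ, ∃ fu fd : Xs → Fin d → ℝ, fu ∈ F ∧ fd ∈ F ∧
      ∀ f, f ∈ F → unifEdist f g ≤ ENNReal.ofReal (α * ε / (2 * Cℓ)) →
        (unifEdist fu g ≤ ENNReal.ofReal (α * ε / (2 * Cℓ)) ∧
          (∫ p, ℓ (f p.1) p.2 ∂η) ≤ (∫ p, ℓ (fu p.1) p.2 ∂η) + δ) ∧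
        (unifEdist fd g ≤ ENNReal.ofReal (α * ε / (2 * Cℓ)) ∧
          (∫ p, ℓ (fd p.1) p.2 ∂η) ≤ (∫ p, ℓ (f p.1) p.2 ∂η) + δ) := by
    intro g
    by_cases hne : ∃ f, f ∈ F ∧ unifEdist f g ≤ ENNReal.ofReal (α * ε / (2 * Cℓ))
    · obtain ⟨f1, hf1F, hf1d⟩ := hne
      set S : Set ℝ := (fun f => ∫ p, ℓ (f p.1) p.2 ∂η) ''
        {f | f ∈ F ∧ unifEdist f g ≤ ENNReal.ofReal (α * ε / (2 * Cℓ))} with hSdef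
      have hSne : S.Nonempty := ⟨_, ⟨f1, ⟨hf1F, hf1d⟩, rfl⟩⟩
      have hSbddA : BddAbove S := by
        refine ⟨M, fun y hy => ?_⟩
        obtain ⟨f, hf, rfl⟩ := hy
        exact hμM f hf.1
      have hSbddB : BddBelow S := by
        refine ⟨0, fun y hy => ?_⟩
        obtain ⟨f, hf, rfl⟩ := hy
        exact hμ0 f hf.1
      obtain ⟨yu, hyuS, hyu⟩ := exists_lt_of_lt_csSup hSne
        (show sSup S - δ < sSup S by linarith)
      obtain ⟨fu, hfu, hfueq⟩ := hyuS
      obtain ⟨yd, hydS, hyd⟩ := exists_lt_of_csInf_lt hSne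
        (show sInf S < sInf S + δ by linarith)
      obtain ⟨fd, hfd, hfdeq⟩ := hydS
      refine ⟨fu, fd, hfu.1, hfd.1, fun f hfF hfdist => ⟨⟨hfu.2, ?_⟩, ⟨hfd.2, ?_⟩⟩⟩
      · have hle : (∫ p, ℓ (f p.1) p.2 ∂η) ≤ sSup S :=
          le_csSup hSbddA ⟨f, ⟨hfF, hfdist⟩, rfl⟩
        rw [← hfueq] at hyu
        linarith
      · have hle : sInf S ≤ ∫ p, ℓ (f p.1) p.2 ∂η :=
          csInf_le hSbddB ⟨f, ⟨hfF, hfdist⟩, rfl⟩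
        rw [← hfdeq] at hyd
        linarith
    · exact ⟨f₀, f₀, hf₀, hf₀, fun f hfF hfdist => absurd ⟨f, hfF, hfdist⟩ hne⟩
  choose fup fdn hup_F hdn_F hprop using hchoice
  -- pointwise Lipschitz transfer across a covering center
  have hpt : ∀ f1 f2 g : Xs → Fin d → ℝ, f1 ∈ F → f2 ∈ F →
      unifEdist f1 g ≤ ENNReal.ofReal (α * ε / (2 * Cℓ)) →
      unifEdist f2 g ≤ ENNReal.ofReal (α * ε / (2 * Cℓ)) →
      ∀ (x : Xs) (y : Fin d → ℝ), y ∈ Yset → |ℓ (f1 x) y - ℓ (f2 x) y| ≤ α * ε := by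
    intro f1 f2 g h1F h2F h1 h2 x y hy
    have hlip := hℓ_lip (f1 x) (f2 x) y (hF_maps _ h1F x) (hF_maps _ h2F x) hy
    rcases le_or_gt Cℓ 0 with hC | hC
    · have hnp : Cℓ * ‖f1 x - f2 x‖ ≤ 0 :=
        mul_nonpos_iff.2 (Or.inr ⟨hC, norm_nonneg _⟩)
      linarith
    · have hκpos : 0 < α * ε / (2 * Cℓ) := by positivity
      have hb : ∀ u : Xs → Fin d → ℝ,
          unifEdist u g ≤ ENNReal.ofReal (α * ε / (2 * Cℓ)) →
          ‖u x - g x‖ ≤ α * ε / (2 * Cℓ) := by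
        intro u hu
        have hle : (‖u x - g x‖₊ : ℝ≥0∞) ≤ ENNReal.ofReal (α * ε / (2 * Cℓ)) :=
          le_trans (le_iSup (fun x => (‖u x - g x‖₊ : ℝ≥0∞)) x) hu
        have h2' := ENNReal.toReal_mono ENNReal.ofReal_ne_top hle
        rwa [ENNReal.coe_toReal, ENNReal.toReal_ofReal hκpos.le, coe_nnnorm] at h2'
      have h12 : ‖f1 x - f2 x‖ ≤ α * ε / (2 * Cℓ) + α * ε / (2 * Cℓ) :=
        calc ‖f1 x - f2 x‖ ≤ ‖f1 x - g x‖ + ‖g x - f2 x‖ :=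
              norm_sub_le_norm_sub_add_norm_sub _ _ _
          _ ≤ α * ε / (2 * Cℓ) + α * ε / (2 * Cℓ) := by
              refine add_le_add (hb f1 h1) ?_
              rw [norm_sub_rev]
              exact hb f2 h2
      calc |ℓ (f1 x) y - ℓ (f2 x) y| ≤ Cℓ * ‖f1 x - f2 x‖ := hlip
        _ ≤ Cℓ * (α * ε / (2 * Cℓ) + α * ε / (2 * Cℓ)) :=
            mul_le_mul_of_nonneg_left h12 hC.le
        _ = α * ε := by field_simp; ring
  -- the generic tail bound for a bounded centred loss
  have htail : ∀ φ : Xs × (Fin d → ℝ) → ℝ, Measurable φ → (∀ᵐ p ∂η, |φ p| ≤ M) →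
      (∫ p, φ p ∂η) = 0 →
      P {ω | (n : ℝ) * t ≤ ∑ i, φ (Z i ω)}
        ≤ ENNReal.ofReal (Real.exp (-(n * t ^ 2) / (2 * M ^ 2))) := by
    intro φ hφm hφb hφ0
    have hbdd : ∀ i : Fin n, ∀ᵐ ω ∂P, |(φ ∘ Z i) ω| ≤ M := by
      intro i
      have hs : MeasurableSet {p : Xs × (Fin d → ℝ) | |φ p| ≤ M} :=
        measurableSet_le hφm.abs measurable_const
      have h1 : ∀ᵐ p ∂(Measure.map (Z i) P), |φ p| ≤ M := by rw [hZ_law i]; exact hφb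
      exact (ae_map_iff (hZ_meas i).aemeasurable hs).1 h1
    have hmean : ∀ i : Fin n, ∫ ω, (φ ∘ Z i) ω ∂P = 0 := by
      intro i
      have h1 : ∫ p, φ p ∂(Measure.map (Z i) P) = ∫ ω, φ (Z i ω) ∂P := by
        refine integral_map (hZ_meas i).aemeasurable ?_
        rw [hZ_law i]
        exact hφm.aestronglyMeasurable
      rw [hZ_law i, hφ0] at h1
      exact h1.symm
    have h := aux_tail P (fun i => φ ∘ Z i) (fun i => hφm.comp (hZ_meas i))
      (hZ_iid.comp (fun _ => φ) (fun _ => hφm)) M hM hbdd hmean t ht.le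
    exact h
  have hexp_bdd : ∀ f1, f1 ∈ F →
      (∀ᵐ p ∂η, |(∫ q, ℓ (f1 q.1) q.2 ∂η) - ℓ (f1 p.1) p.2| ≤ M) := by
    intro f1 hf1
    filter_upwards [hae_bdd f1 hf1] with p hp
    have h1 := hμ0 f1 hf1
    have h2 := hμM f1 hf1
    rw [abs_le]
    constructor <;> linarith [hp.1, hp.2]
  have htail_up : ∀ f1, f1 ∈ F →
      P {ω | (n : ℝ) * t ≤ ∑ i, ((∫ q, ℓ (f1 q.1) q.2 ∂η) - ℓ (f1 (Z i ω).1) (Z i ω).2)}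
        ≤ ENNReal.ofReal (Real.exp (-(n * t ^ 2) / (2 * M ^ 2))) := by
    intro f1 hf1
    refine htail (fun p => (∫ q, ℓ (f1 q.1) q.2 ∂η) - ℓ (f1 p.1) p.2)
      (measurable_const.sub (hfmeas f1 hf1)) (hexp_bdd f1 hf1) ?_
    rw [integral_sub (integrable_const _) (hInt f1 hf1)]
    simp [measure_univ]
  have htail_dn : ∀ f1, f1 ∈ F →
      P {ω | (n : ℝ) * t ≤ ∑ i, (ℓ (f1 (Z i ω).1) (Z i ω).2 - ∫ q, ℓ (f1 q.1) q.2 ∂η)}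
        ≤ ENNReal.ofReal (Real.exp (-(n * t ^ 2) / (2 * M ^ 2))) := by
    intro f1 hf1
    refine htail (fun p => ℓ (f1 p.1) p.2 - ∫ q, ℓ (f1 q.1) q.2 ∂η)
      ((hfmeas f1 hf1).sub measurable_const) ?_ ?_
    · filter_upwards [hexp_bdd f1 hf1] with p hp
      rwa [abs_sub_comm]
    · rw [integral_sub (hInt f1 hf1) (integrable_const _)]
      simp [measure_univ]
  -- the event inclusion
  have hsub : {ω | ε ≤ ⨆ f ∈ F,
        |(∫ p, ℓ (f p.1) p.2 ∂η)
          - (n : ℝ)⁻¹ * ∑ i, ℓ (f (Z i ω).1) (Z i ω).2|} ⊆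
      (⋃ i, Z i ⁻¹' Bad) ∪ ⋃ g ∈ K,
        ({ω | (n : ℝ) * t ≤ ∑ i,
            ((∫ q, ℓ ((fup g) q.1) q.2 ∂η) - ℓ ((fup g) (Z i ω).1) (Z i ω).2)} ∪
         {ω | (n : ℝ) * t ≤ ∑ i,
            (ℓ ((fdn g) (Z i ω).1) (Z i ω).2 - ∫ q, ℓ ((fdn g) q.1) q.2 ∂η)}) := by
    intro ω hω
    by_cases hωN : ω ∈ ⋃ i, Z i ⁻¹' Bad
    · exact Or.inl hωN
    right
    have hω' : ε - δ < ⨆ f, ⨆ _ : f ∈ F,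
        |(∫ p, ℓ (f p.1) p.2 ∂η)
          - (n : ℝ)⁻¹ * ∑ i, ℓ (f (Z i ω).1) (Z i ω).2| :=
      lt_of_lt_of_le (by linarith) hω
    obtain ⟨f, hfl⟩ := exists_lt_of_lt_ciSup hω'
    by_cases hfF : f ∈ F
    swap
    · exfalso
      haveI : IsEmpty (f ∈ F) := ⟨fun h => hfF h⟩
      rw [Real.iSup_of_isEmpty] at hfl
      linarith
    rw [ciSup_pos hfF] at hfl
    obtain ⟨g, hgK, hfg⟩ := hK f hfF
    obtain ⟨⟨hupd, hupμ⟩, ⟨hdnd, hdnμ⟩⟩ := hprop g f hfF hfg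
    have hgood' := hgood ω hωN
    refine Set.mem_biUnion hgK ?_
    have hnαε : (0:ℝ) ≤ (n:ℝ) * (α * ε) := by positivity
    have h1αε : (0:ℝ) < (1 - α) * ε := mul_pos h1α hε
    rcases lt_abs.1 hfl with hca | hca
    · -- upward deviation : use the near-maximal representative
      refine Or.inl ?_
      show (n : ℝ) * t ≤ ∑ i,
          ((∫ q, ℓ ((fup g) q.1) q.2 ∂η) - ℓ ((fup g) (Z i ω).1) (Z i ω).2)
      have hSup : ∑ i, ℓ ((fup g) (Z i ω).1) (Z i ω).2
          ≤ (∑ i, ℓ (f (Z i ω).1) (Z i ω).2) + (n : ℝ) * (α * ε) := by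
        calc ∑ i, ℓ ((fup g) (Z i ω).1) (Z i ω).2
            ≤ ∑ i : Fin n, (ℓ (f (Z i ω).1) (Z i ω).2 + α * ε) := by
              refine Finset.sum_le_sum fun i _ => ?_
              have h := hpt (fup g) f g (hup_F g) hfF hupd hfg (Z i ω).1 (Z i ω).2 (hgood' i)
              have h' := abs_le.1 h
              linarith [h'.1, h'.2]
          _ = (∑ i, ℓ (f (Z i ω).1) (Z i ω).2) + (n : ℝ) * (α * ε) := by
              rw [Finset.sum_add_distrib, Finset.sum_const, Finset.card_univ,
                Fintype.card_fin, nsmul_eq_mul]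
      have hSf : ∑ i, ℓ (f (Z i ω).1) (Z i ω).2
          < (n : ℝ) * ((∫ p, ℓ (f p.1) p.2 ∂η) - (ε - δ)) := by
        have h1 : (n : ℝ)⁻¹ * ∑ i, ℓ (f (Z i ω).1) (Z i ω).2
            < (∫ p, ℓ (f p.1) p.2 ∂η) - (ε - δ) := by linarith
        calc ∑ i, ℓ (f (Z i ω).1) (Z i ω).2
            = (n : ℝ) * ((n : ℝ)⁻¹ * ∑ i, ℓ (f (Z i ω).1) (Z i ω).2) := by
              field_simp
          _ < _ := mul_lt_mul_of_pos_left h1 hn'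
      have hgoal : ∑ i, ((∫ q, ℓ ((fup g) q.1) q.2 ∂η) - ℓ ((fup g) (Z i ω).1) (Z i ω).2)
          = (n : ℝ) * (∫ q, ℓ ((fup g) q.1) q.2 ∂η)
            - ∑ i, ℓ ((fup g) (Z i ω).1) (Z i ω).2 := by
        rw [Finset.sum_sub_distrib, Finset.sum_const, Finset.card_univ,
          Fintype.card_fin, nsmul_eq_mul]
      rw [hgoal]
      have h2 : (n : ℝ) * (∫ p, ℓ (f p.1) p.2 ∂η)
          ≤ (n : ℝ) * ((∫ q, ℓ ((fup g) q.1) q.2 ∂η) + δ) :=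
        mul_le_mul_of_nonneg_left hupμ hn'.le
      rw [mul_add] at h2
      rw [mul_sub, mul_sub] at hSf
      have h3 : (n : ℝ) * t ≤ (n : ℝ) * ε - 2 * ((n : ℝ) * δ) - (n : ℝ) * (α * ε) := by
        rw [htdef, hδdef]
        nlinarith [mul_pos hn' h1αε]
      linarith [h2, hSf, hSup, h3]
    · -- downward deviation : use the near-minimal representative
      refine Or.inr ?_
      show (n : ℝ) * t ≤ ∑ i,
          (ℓ ((fdn g) (Z i ω).1) (Z i ω).2 - ∫ q, ℓ ((fdn g) q.1) q.2 ∂η)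
      have hSdn : (∑ i, ℓ (f (Z i ω).1) (Z i ω).2) - (n : ℝ) * (α * ε)
          ≤ ∑ i, ℓ ((fdn g) (Z i ω).1) (Z i ω).2 := by
        calc (∑ i, ℓ (f (Z i ω).1) (Z i ω).2) - (n : ℝ) * (α * ε)
            = ∑ i : Fin n, (ℓ (f (Z i ω).1) (Z i ω).2 - α * ε) := by
              rw [Finset.sum_sub_distrib, Finset.sum_const, Finset.card_univ,
                Fintype.card_fin, nsmul_eq_mul]
          _ ≤ ∑ i, ℓ ((fdn g) (Z i ω).1) (Z i ω).2 := by
              refine Finset.sum_le_sum fun i _ => ?_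
              have h := hpt (fdn g) f g (hdn_F g) hfF hdnd hfg (Z i ω).1 (Z i ω).2 (hgood' i)
              have h' := abs_le.1 h
              linarith [h'.1, h'.2]
      have hSf : (n : ℝ) * ((∫ p, ℓ (f p.1) p.2 ∂η) + (ε - δ))
          < ∑ i, ℓ (f (Z i ω).1) (Z i ω).2 := by
        have h1 : (∫ p, ℓ (f p.1) p.2 ∂η) + (ε - δ)
            < (n : ℝ)⁻¹ * ∑ i, ℓ (f (Z i ω).1) (Z i ω).2 := by linarith
        calc (n : ℝ) * ((∫ p, ℓ (f p.1) p.2 ∂η) + (ε - δ))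
            < (n : ℝ) * ((n : ℝ)⁻¹ * ∑ i, ℓ (f (Z i ω).1) (Z i ω).2) :=
              mul_lt_mul_of_pos_left h1 hn'
          _ = ∑ i, ℓ (f (Z i ω).1) (Z i ω).2 := by field_simp
      have hgoal : ∑ i, (ℓ ((fdn g) (Z i ω).1) (Z i ω).2 - ∫ q, ℓ ((fdn g) q.1) q.2 ∂η)
          = (∑ i, ℓ ((fdn g) (Z i ω).1) (Z i ω).2)
            - (n : ℝ) * (∫ q, ℓ ((fdn g) q.1) q.2 ∂η) := by
        rw [Finset.sum_sub_distrib, Finset.sum_const, Finset.card_univ,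
          Fintype.card_fin, nsmul_eq_mul]
      rw [hgoal]
      have h2 : (n : ℝ) * (∫ q, ℓ ((fdn g) q.1) q.2 ∂η)
          ≤ (n : ℝ) * ((∫ p, ℓ (f p.1) p.2 ∂η) + δ) :=
        mul_le_mul_of_nonneg_left hdnμ hn'.le
      rw [mul_add] at h2
      rw [mul_add, mul_sub] at hSf
      have h3 : (n : ℝ) * t ≤ (n : ℝ) * ε - 2 * ((n : ℝ) * δ) - (n : ℝ) * (α * ε) := by
        rw [htdef, hδdef]
        nlinarith [mul_pos hn' h1αε]
      linarith [h2, hSf, hSdn, h3]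
  -- put everything together
  have hexp_eq : -((n : ℝ) * t ^ 2) / (2 * M ^ 2)
      = -(1 / 8) * (1 - α) ^ 2 * (n : ℝ) * ε ^ 2 / M ^ 2 := by
    rw [htdef]
    field_simp
    ring
  calc P {ω | ε ≤ ⨆ f ∈ F,
        |(∫ p, ℓ (f p.1) p.2 ∂η)
          - (n : ℝ)⁻¹ * ∑ i, ℓ (f (Z i ω).1) (Z i ω).2|}
      ≤ P ((⋃ i, Z i ⁻¹' Bad) ∪ ⋃ g ∈ K,
        ({ω | (n : ℝ) * t ≤ ∑ i,
            ((∫ q, ℓ ((fup g) q.1) q.2 ∂η) - ℓ ((fup g) (Z i ω).1) (Z i ω).2)} ∪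
         {ω | (n : ℝ) * t ≤ ∑ i,
            (ℓ ((fdn g) (Z i ω).1) (Z i ω).2 - ∫ q, ℓ ((fdn g) q.1) q.2 ∂η)})) :=
        measure_mono hsub
    _ ≤ P (⋃ i, Z i ⁻¹' Bad) + P (⋃ g ∈ K,
        ({ω | (n : ℝ) * t ≤ ∑ i,
            ((∫ q, ℓ ((fup g) q.1) q.2 ∂η) - ℓ ((fup g) (Z i ω).1) (Z i ω).2)} ∪
         {ω | (n : ℝ) * t ≤ ∑ i,
            (ℓ ((fdn g) (Z i ω).1) (Z i ω).2 - ∫ q, ℓ ((fdn g) q.1) q.2 ∂η)})) :=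
        measure_union_le _ _
    _ = P (⋃ g ∈ K,
        ({ω | (n : ℝ) * t ≤ ∑ i,
            ((∫ q, ℓ ((fup g) q.1) q.2 ∂η) - ℓ ((fup g) (Z i ω).1) (Z i ω).2)} ∪
         {ω | (n : ℝ) * t ≤ ∑ i,
            (ℓ ((fdn g) (Z i ω).1) (Z i ω).2 - ∫ q, ℓ ((fdn g) q.1) q.2 ∂η)})) := by
        rw [hPN, zero_add]
    _ ≤ ∑ g ∈ K, P
        ({ω | (n : ℝ) * t ≤ ∑ i,
            ((∫ q, ℓ ((fup g) q.1) q.2 ∂η) - ℓ ((fup g) (Z i ω).1) (Z i ω).2)} ∪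
         {ω | (n : ℝ) * t ≤ ∑ i,
            (ℓ ((fdn g) (Z i ω).1) (Z i ω).2 - ∫ q, ℓ ((fdn g) q.1) q.2 ∂η)}) :=
        measure_biUnion_finset_le _ _
    _ ≤ ∑ _g ∈ K, (ENNReal.ofReal (Real.exp (-((n : ℝ) * t ^ 2) / (2 * M ^ 2)))
        + ENNReal.ofReal (Real.exp (-((n : ℝ) * t ^ 2) / (2 * M ^ 2)))) := by
        refine Finset.sum_le_sum fun g _ => ?_
        exact le_trans (measure_union_le _ _)
          (add_le_add (htail_up (fup g) (hup_F g)) (htail_dn (fdn g) (hdn_F g)))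
    _ = (K.card : ℝ≥0∞) * (ENNReal.ofReal (Real.exp (-((n : ℝ) * t ^ 2) / (2 * M ^ 2)))
        + ENNReal.ofReal (Real.exp (-((n : ℝ) * t ^ 2) / (2 * M ^ 2)))) := by
        rw [Finset.sum_const, nsmul_eq_mul]
    _ = 2 * ((K.card : ℝ≥0∞)
        * ENNReal.ofReal (Real.exp (-((n : ℝ) * t ^ 2) / (2 * M ^ 2)))) := by
        ring
    _ = 2 * (coverNum unifEdist F (α * ε / (2 * Cℓ))
        * ENNReal.ofReal (Real.exp (-((n : ℝ) * t ^ 2) / (2 * M ^ 2)))) := by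
        rw [hNcard]
    _ = 2 * (coverNum unifEdist F (α * ε / (2 * Cℓ))
        * ENNReal.ofReal
            (Real.exp (-(1 / 8) * (1 - α) ^ 2 * (n : ℝ) * ε ^ 2 / M ^ 2))) := by
        rw [hexp_eq]
end
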